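/- arXiv:1406.4722 — 11 statements merged into one kernel-verified Lean document; each statement's English description precedes it below -/
import Mathlib

section
/- Let n ≥ 1 and work in the polynomial ring (ℤ/2)[t₁,…,tₙ]. For every k with 1 ≤ k ≤ n, the power t_k^{k+1} lies in the ideal 𝒯ₙ; equivalently, t_k^{k+1} = 0 in the quotient ring (ℤ/2)[t₁,…,tₙ]/𝒯ₙ. -/
open MvPolynomial

/-- The ideal 𝒯ₙ ⊆ (ℤ/2)[t₁,…,tₙ] generated by t₁² and t_i² + t_{i−1}·t_i for 2 ≤ i ≤ n
(zero-based indexing: generator for index `i` is `X i ^ 2` when `i = 0`, and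
`X i ^ 2 + X (i-1) * X i` otherwise; note that in characteristic 2, `+` is the same as in
the paper). -/
noncomputable def Tideal (n : ℕ) : Ideal (MvPolynomial (Fin n) (ZMod 2)) :=
  Ideal.span (Set.range fun i : Fin n =>
    X i ^ 2 +
      if (i : ℕ) = 0 then 0
      else X (⟨(i : ℕ) - 1, Nat.lt_of_le_of_lt (Nat.sub_le _ _) i.isLt⟩ : Fin n) * X i)

lemma Tideal.gen_mem (n : ℕ) (i : Fin n) :
    (X i ^ 2 +
      if (i : ℕ) = 0 then 0
      else X (⟨(i : ℕ) - 1, Nat.lt_of_le_of_lt (Nat.sub_le _ _) i.isLt⟩ : Fin n) * X i)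
      ∈ Tideal n :=
  Ideal.subset_span ⟨i, rfl⟩

lemma pow_succ_eq {R : Type*} [CommRing R] (a b : R) (h : b ^ 2 = a * b) :
    ∀ m, b ^ (m + 1) = a ^ m * b
  | 0 => by simp
  | (m + 1) => by
      rw [pow_succ, pow_succ_eq a b h m, mul_assoc, ← pow_two, h, ← mul_assoc, ← pow_succ]

lemma Tideal.key (n : ℕ) : ∀ k, ∀ hk1 : 1 ≤ k, ∀ hkn : k ≤ n,
    (Ideal.Quotient.mk (Tideal n))
      (X (⟨k - 1, Nat.lt_of_lt_of_le (Nat.sub_lt hk1 Nat.one_pos) hkn⟩ : Fin n) : MvPolynomial (Fin n) (ZMod 2)) ^ (k + 1) = 0 := by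
  intro k
  induction k with
  | zero => omega
  | succ k ih =>
    intro _ hkn
    rcases Nat.eq_zero_or_pos k with rfl | hk
    · -- base case: k+1 = 1, square of X 0
      rw [← map_pow, Ideal.Quotient.eq_zero_iff_mem]
      simpa using Tideal.gen_mem n ⟨0, by omega⟩
    · -- inductive step
      have hne : ((⟨k + 1 - 1, by omega⟩ : Fin n) : ℕ) ≠ 0 := by simp; omega
      have h := Tideal.gen_mem n ⟨k + 1 - 1, by omega⟩
      rw [if_neg hne] at h
      set a : MvPolynomial (Fin n) (ZMod 2) := X ⟨k - 1, by omega⟩ with ha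
      set b : MvPolynomial (Fin n) (ZMod 2) := X ⟨k + 1 - 1, by omega⟩ with hb
      have hab : (Ideal.Quotient.mk (Tideal n)) b ^ 2 =
          (Ideal.Quotient.mk (Tideal n)) a * (Ideal.Quotient.mk (Tideal n)) b := by
        rw [← map_pow, ← map_mul, Ideal.Quotient.eq, CharTwo.sub_eq_add]
        exact h
      have := pow_succ_eq _ _ hab (k + 1)
      rw [this, ih hk (by omega), zero_mul]

/-- For every `1 ≤ k ≤ n`, the power `t_k^{k+1}` lies in the ideal `𝒯ₙ`, i.e. it vanishes
in the quotient ring `(ℤ/2)[t₁,…,tₙ]/𝒯ₙ`. -/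
theorem stmt0 (n : ℕ) (hn : 1 ≤ n) (k : ℕ) (hk1 : 1 ≤ k) (hkn : k ≤ n) :
    (X (⟨k - 1, by omega⟩ : Fin n) : MvPolynomial (Fin n) (ZMod 2)) ^ (k + 1) ∈ Tideal n := by
  rw [← Ideal.Quotient.eq_zero_iff_mem, map_pow]
  exact Tideal.key n k hk1 hkn
end

section
/- Let n ≥ 1. In the quotient ring (ℤ/2)[t₁,…,tₙ]/𝒯ₙ the following identity holds: (∏_{j=1}^{n−1} (1 + t_j)) · (∏_{j=1}^{n−1} (1 + t_j + t_j² + ⋯ + t_j^{j})) = 1. In particular ∏_{j=1}^{n−1}(1+t_j) is a unit of the quotient ring with inverse ∏_{j=1}^{n−1} (1 + t_j + ⋯ + t_j^{j}). -/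
open MvPolynomial

set_option maxHeartbeats 1000000
set_option synthInstance.maxHeartbeats 400000

/-- In `(ℤ/2)[t₁,…,tₙ]/𝒯ₙ` we have
`(∏_{j=1}^{n−1} (1+t_j)) · (∏_{j=1}^{n−1} (1+t_j+⋯+t_j^j)) = 1`; in particular,
`∏_{j=1}^{n−1}(1+t_j)` is a unit of the quotient ring.
(In zero-based indexing, `t_j` for `1 ≤ j ≤ n−1` corresponds to `X i` with `i < n−1`, and
`1 + t_j + ⋯ + t_j^j` becomes `∑_{e < i+2} (X i)^e`.) -/
theorem stmt1 (n : ℕ) (hn : 1 ≤ n) :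
    Ideal.Quotient.mk (Tideal n)
        ((∏ i ∈ Finset.univ.filter (fun i : Fin n => (i : ℕ) < n - 1), (1 + X i)) *
          (∏ i ∈ Finset.univ.filter (fun i : Fin n => (i : ℕ) < n - 1),
            ∑ e ∈ Finset.range ((i : ℕ) + 2), X i ^ e)) = 1 ∧
    IsUnit (Ideal.Quotient.mk (Tideal n)
        (∏ i ∈ Finset.univ.filter (fun i : Fin n => (i : ℕ) < n - 1), (1 + X i))) := by
  set R := MvPolynomial (Fin n) (ZMod 2) ⧸ Tideal n
  set f := Ideal.Quotient.mk (Tideal n)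
  set y : Fin n → R := fun i => f (X i) with hy
  -- characteristic 2 facts
  have h2 : (2 : R) = 0 := by
    have : ((2 : ℕ) : MvPolynomial (Fin n) (ZMod 2)) = 0 := by
      rw [show ((2:ℕ) : MvPolynomial (Fin n) (ZMod 2)) = C ((2:ℕ) : ZMod 2) from
        (map_natCast C 2).symm]
      rw [show ((2:ℕ) : ZMod 2) = 0 from rfl, map_zero]
    have h := congrArg f this
    rw [map_natCast, map_zero] at h
    exact_mod_cast h
  have hneg : ∀ x : R, -x = x := by
    intro x
    rw [neg_eq_iff_add_eq_zero]
    have : x + x = 2 * x := by ring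
    rw [this, h2, zero_mul]
  -- the defining relations
  have rel : ∀ i : Fin n, y i ^ 2 =
      if (i : ℕ) = 0 then 0
      else y (⟨(i : ℕ) - 1, Nat.lt_of_le_of_lt (Nat.sub_le _ _) i.isLt⟩ : Fin n) * y i := by
    intro i
    have hmem : (X i ^ 2 +
        if (i : ℕ) = 0 then 0
        else X (⟨(i : ℕ) - 1, Nat.lt_of_le_of_lt (Nat.sub_le _ _) i.isLt⟩ : Fin n) * X i)
        ∈ Tideal n := Ideal.subset_span ⟨i, rfl⟩
    have h0 : f (X i ^ 2 +
        if (i : ℕ) = 0 then 0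
        else X (⟨(i : ℕ) - 1, Nat.lt_of_le_of_lt (Nat.sub_le _ _) i.isLt⟩ : Fin n) * X i) = 0 :=
      (Ideal.Quotient.eq_zero_iff_mem).2 hmem
    rw [map_add, map_pow, add_eq_zero_iff_eq_neg] at h0
    rw [h0, hneg]
    by_cases h : (i : ℕ) = 0 <;> simp [h, hy]
  -- nilpotence: y i ^ (i+2) = 0
  have nilp : ∀ m : ℕ, ∀ i : Fin n, (i : ℕ) = m → y i ^ (m + 2) = 0 := by
    intro m
    induction m with
    | zero =>
      intro i hi
      have h := rel i
      rw [if_pos hi] at h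
      exact h
    | succ m ih =>
      intro i hi
      set j : Fin n := ⟨(i : ℕ) - 1, Nat.lt_of_le_of_lt (Nat.sub_le _ _) i.isLt⟩ with hj
      have hji : (j : ℕ) = m := by simp [hj, hi]
      have hsq : y i ^ 2 = y j * y i := by
        have := rel i
        rw [if_neg (by omega)] at this
        exact this
      have step : ∀ k : ℕ, y i ^ (k + 1) = y j ^ k * y i := by
        intro k
        induction k with
        | zero => simp
        | succ k ihk =>
          calc y i ^ (k + 2) = y i ^ (k + 1) * y i := pow_succ _ _
            _ = y j ^ k * y i * y i := by rw [ihk]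
            _ = y j ^ k * (y i * y i) := mul_assoc _ _ _
            _ = y j ^ k * (y i ^ 2) := by rw [sq]
            _ = y j ^ k * (y j * y i) := by rw [hsq]
            _ = y j ^ k * y j * y i := (mul_assoc _ _ _).symm
            _ = y j ^ (k + 1) * y i := by rw [pow_succ]
      have : y i ^ (m + 2 + 1) = y j ^ (m + 2) * y i := step (m + 2)
      rw [this, ih j hji, zero_mul]
  -- geometric series
  have key : ∀ i : Fin n, (1 + y i) * (∑ e ∈ Finset.range ((i : ℕ) + 2), y i ^ e) = 1 := by
    intro i
    have h1 : (1 + y i) = y i - 1 := by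
      rw [sub_eq_add_neg, hneg 1, add_comm]
    rw [h1, mul_comm, geom_sum_mul, nilp (i : ℕ) i rfl, zero_sub, hneg]
  -- conclude
  have main : f ((∏ i ∈ Finset.univ.filter (fun i : Fin n => (i : ℕ) < n - 1), (1 + X i)) *
          (∏ i ∈ Finset.univ.filter (fun i : Fin n => (i : ℕ) < n - 1),
            ∑ e ∈ Finset.range ((i : ℕ) + 2), X i ^ e)) = 1 := by
    rw [map_mul, map_prod, map_prod]
    simp only [map_add, map_one, map_sum, map_pow]
    rw [← Finset.prod_mul_distrib]
    exact Finset.prod_eq_one fun i _ => key i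
  refine ⟨main, ?_⟩
  rw [map_mul] at main
  exact IsUnit.of_mul_eq_one _ main
end

section
/- Let n ≥ 1. Every element of the quotient ring (ℤ/2)[u₁,…,uₙ]/𝒰ₙ is the image of a polynomial all of whose monomials are square-free, i.e., the images of the square-free monomials ∏_{i∈S} u_i (over subsets S ⊆ {1,…,n}) span the quotient as a vector space over ℤ/2. -/
open MvPolynomial

/-- The ideal 𝒰ₙ ⊆ (ℤ/2)[u₁,…,uₙ] generated by u₁² and u_i² + (u₁+⋯+u_{i−1})·u_i for
2 ≤ i ≤ n (zero-based indexing: the generator for index `i` is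
`X i ^ 2 + (∑_{j < i} X j) * X i`; for `i = 0` the sum is empty). -/
noncomputable def Uideal (n : ℕ) : Ideal (MvPolynomial (Fin n) (ZMod 2)) :=
  Ideal.span (Set.range fun i : Fin n =>
    X i ^ 2 + (∑ j ∈ Finset.Iio i, X j) * X i)

/-- Representability by a square-free polynomial. -/
def RepSF (n : ℕ) (x : MvPolynomial (Fin n) (ZMod 2) ⧸ Uideal n) : Prop :=
  ∃ P : MvPolynomial (Fin n) (ZMod 2),
    (∀ m ∈ P.support, ∀ j, m j ≤ 1) ∧ Ideal.Quotient.mk (Uideal n) P = x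

lemma Rep_zero (n : ℕ) : RepSF n 0 :=
  ⟨0, by simp, by simp⟩

lemma Rep_add {n : ℕ} {x y : MvPolynomial (Fin n) (ZMod 2) ⧸ Uideal n}
    (hx : RepSF n x) (hy : RepSF n y) : RepSF n (x + y) := by
  obtain ⟨P, hP, hPx⟩ := hx
  obtain ⟨Q, hQ, hQy⟩ := hy
  refine ⟨P + Q, ?_, by simp [map_add, hPx, hQy]⟩
  intro m hm j
  have := MvPolynomial.support_add (p := P) (q := Q) hm
  rcases Finset.mem_union.mp this with h | h
  · exact hP m h j
  · exact hQ m h j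

lemma Rep_sum {n : ℕ} {ι : Type*} (s : Finset ι)
    (f : ι → MvPolynomial (Fin n) (ZMod 2) ⧸ Uideal n)
    (h : ∀ i ∈ s, RepSF n (f i)) : RepSF n (∑ i ∈ s, f i) := by
  classical
  induction s using Finset.induction_on with
  | empty => simpa using Rep_zero n
  | insert _ _ hni ih =>
    rename_i a s
    rw [Finset.sum_insert hni]
    exact Rep_add (h a (Finset.mem_insert_self a s))
      (ih fun i hi => h i (Finset.mem_insert_of_mem hi))

lemma mk_X_sq (n : ℕ) (i : Fin n) :
    Ideal.Quotient.mk (Uideal n) (X i ^ 2) =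
      Ideal.Quotient.mk (Uideal n) ((∑ j ∈ Finset.Iio i, X j) * X i) := by
  rw [Ideal.Quotient.eq]
  have h : X (R := ZMod 2) i ^ 2 - (∑ j ∈ Finset.Iio i, X j) * X i
      = X i ^ 2 + (∑ j ∈ Finset.Iio i, X j) * X i := by
    rw [CharTwo.sub_eq_add]
  rw [h]
  exact Ideal.subset_span ⟨i, rfl⟩

lemma key (n : ℕ) : ∀ (k : ℕ) (i : Fin n), (i : ℕ) = k →
    ∀ (m : Fin n →₀ ℕ), (∀ j, m j ≤ 1) → ∀ c : ZMod 2,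
    RepSF n (Ideal.Quotient.mk (Uideal n) (monomial m c * X i)) := by
  classical
  intro k
  induction k using Nat.strong_induction_on with
  | _ k IH =>
    intro i hik m hm c
    by_cases hmi : m i = 0
    · -- no square appears
      refine ⟨monomial (m + Finsupp.single i 1) c, ?_, ?_⟩
      · intro m' hm' j
        rw [MvPolynomial.support_monomial] at hm'
        by_cases hc : c = 0
        · simp [hc] at hm'
        · simp [hc] at hm'
          subst hm'
          rcases eq_or_ne j i with rfl | hji
          · simp [hmi]
          · simpa [Finsupp.single_apply, hji.symm] using hm j
      · rw [X, MvPolynomial.monomial_mul, mul_one]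
    · -- m i = 1 : reduce using the relation
      have hmi1 : m i = 1 := le_antisymm (hm i) (Nat.one_le_iff_ne_zero.mpr hmi)
      set m' : Fin n →₀ ℕ := m - Finsupp.single i 1 with hm'
      have hsplit : m' + Finsupp.single i 1 = m := by
        ext j
        rcases eq_or_ne j i with rfl | hji
        · simp [hm', hmi1]
        · simp [hm', Finsupp.single_apply, hji.symm]
      have hmon : monomial m c = monomial m' c * X i := by
        rw [X, MvPolynomial.monomial_mul, mul_one, hsplit]
      have hcalc : Ideal.Quotient.mk (Uideal n) (monomial m c * X i)
          = Ideal.Quotient.mk (Uideal n)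
              (∑ j ∈ Finset.Iio i, monomial m c * X j) := by
        calc Ideal.Quotient.mk (Uideal n) (monomial m c * X i)
            = Ideal.Quotient.mk (Uideal n) (monomial m' c * X i ^ 2) := by
              rw [hmon]; ring_nf
          _ = Ideal.Quotient.mk (Uideal n)
                (monomial m' c * ((∑ j ∈ Finset.Iio i, X j) * X i)) := by
              rw [map_mul, map_mul, mk_X_sq]
          _ = Ideal.Quotient.mk (Uideal n)
                (∑ j ∈ Finset.Iio i, monomial m c * X j) := by
              congr 1
              rw [hmon, Finset.sum_mul, Finset.mul_sum]
              apply Finset.sum_congr rfl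
              intro j _
              ring
      rw [hcalc, map_sum]
      refine Rep_sum _ _ fun j hj => ?_
      have hji : (j : ℕ) < k := by
        rw [← hik]; exact Fin.lt_def.mp (Finset.mem_Iio.mp hj)
      exact IH (j : ℕ) hji j rfl m hm c

lemma Rep_all (n : ℕ) (Q : MvPolynomial (Fin n) (ZMod 2)) :
    RepSF n (Ideal.Quotient.mk (Uideal n) Q) := by
  classical
  induction Q using MvPolynomial.induction_on with
  | C a =>
      refine ⟨C a, ?_, rfl⟩
      intro m hm j
      rw [MvPolynomial.C_apply, MvPolynomial.support_monomial] at hm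
      split at hm <;> simp_all
  | add p q hp hq => rw [map_add]; exact Rep_add hp hq
  | mul_X p i hp =>
      obtain ⟨P, hP, hPx⟩ := hp
      have : Ideal.Quotient.mk (Uideal n) (p * X i)
          = Ideal.Quotient.mk (Uideal n) (P * X i) := by
        rw [map_mul, map_mul, hPx]
      rw [this]
      have hPsum : P * X i = ∑ m ∈ P.support, monomial m (P.coeff m) * X i := by
        conv_lhs => rw [P.as_sum]
        rw [Finset.sum_mul]
      rw [hPsum, map_sum]
      exact Rep_sum _ _ fun m hm => key n (i : ℕ) i rfl m (hP m hm) _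

/-- Every element of `(ℤ/2)[u₁,…,uₙ]/𝒰ₙ` is the image of a polynomial all of whose
monomials are square-free (each variable occurs with exponent at most 1); i.e. the
square-free monomials span the quotient over ℤ/2. -/
theorem stmt2 (n : ℕ) (hn : 1 ≤ n)
    (x : MvPolynomial (Fin n) (ZMod 2) ⧸ Uideal n) :
    ∃ P : MvPolynomial (Fin n) (ZMod 2),
      (∀ m ∈ P.support, ∀ j, m j ≤ 1) ∧ Ideal.Quotient.mk (Uideal n) P = x := by
  obtain ⟨Q, rfl⟩ := Ideal.Quotient.mk_surjective x
  exact Rep_all n Q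
end

section
/- Let n ≥ 1, let 1 ≤ i ≤ n and let k ≥ 1. In the quotient ring (ℤ/2)[u₁,…,uₙ]/𝒰ₙ, the image of u_i^k equals the image of a polynomial Q all of whose monomials are square-free and which involves only the variables u₁,…,u_i. -/
open MvPolynomial

namespace UidealAux

variable {n : ℕ}

/-- square-free -/
def SF (Q : MvPolynomial (Fin n) (ZMod 2)) : Prop := ∀ m ∈ Q.support, ∀ j, m j ≤ 1

/-- all variables have index < t -/
def VLT (t : ℕ) (Q : MvPolynomial (Fin n) (ZMod 2)) : Prop :=
  ∀ m ∈ Q.support, ∀ j : Fin n, m j ≠ 0 → (j : ℕ) < t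

lemma VLT_mul {t : ℕ} {p q : MvPolynomial (Fin n) (ZMod 2)}
    (hp : VLT t p) (hq : VLT t q) : VLT t (p * q) := by
  intro m hm j hj
  have := MvPolynomial.support_mul p q hm
  rw [Finset.mem_add] at this
  obtain ⟨a, ha, b, hb, rfl⟩ := this
  have : a j ≠ 0 ∨ b j ≠ 0 := by
    by_contra h
    push_neg at h
    simp [Finsupp.add_apply, h.1, h.2] at hj
  rcases this with h | h
  · exact hp a ha j h
  · exact hq b hb j h

lemma VLT_one {t : ℕ} : VLT t (1 : MvPolynomial (Fin n) (ZMod 2)) := by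
  intro m hm j hj
  have h1 : (1 : MvPolynomial (Fin n) (ZMod 2)) = monomial 0 1 := by
    simp
  rw [h1, MvPolynomial.support_monomial] at hm
  simp at hm
  subst hm
  simp at hj

lemma VLT_pow {t : ℕ} {p : MvPolynomial (Fin n) (ZMod 2)} (hp : VLT t p) (e : ℕ) :
    VLT t (p ^ e) := by
  induction e with
  | zero => simpa using VLT_one
  | succ e ih => rw [pow_succ]; exact VLT_mul ih hp

lemma VLT_X {t : ℕ} {v : Fin n} (hv : (v : ℕ) < t) :
    VLT t (X v : MvPolynomial (Fin n) (ZMod 2)) := by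
  intro m hm j hj
  rw [MvPolynomial.support_X] at hm
  simp at hm
  subst hm
  rcases eq_or_ne v j with h | h
  · rw [← h]; exact hv
  · simp [Finsupp.single_apply, h] at hj

lemma VLT_sum {t : ℕ} {s : Finset (Fin n)} {f : Fin n → MvPolynomial (Fin n) (ZMod 2)}
    (hf : ∀ x ∈ s, VLT t (f x)) : VLT t (∑ x ∈ s, f x) := by
  classical
  induction s using Finset.induction_on with
  | empty => intro m hm; simp at hm
  | @insert a s' hx ih =>
    rw [Finset.sum_insert hx]
    intro m hm j hj
    rcases Finset.mem_union.mp (Finsupp.support_add hm) with h | h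
    · exact hf a (Finset.mem_insert_self a s') m h j hj
    · exact ih (fun x hx' => hf x (Finset.mem_insert_of_mem hx')) m h j hj

lemma sigma_VLT (v : Fin n) :
    VLT (v : ℕ) (∑ j ∈ Finset.Iio v, X j : MvPolynomial (Fin n) (ZMod 2)) := by
  apply VLT_sum
  intro x hx
  rw [Finset.mem_Iio] at hx
  exact VLT_X hx

lemma sq_eq (v : Fin n) :
    Ideal.Quotient.mk (Uideal n) (X v ^ 2)
      = Ideal.Quotient.mk (Uideal n) ((∑ j ∈ Finset.Iio v, X j) * X v) := by
  have h : (X v ^ 2 + (∑ j ∈ Finset.Iio v, X j) * X v : MvPolynomial (Fin n) (ZMod 2))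
      ∈ Uideal n := Ideal.subset_span ⟨v, rfl⟩
  have h2 : (X v ^ 2 - (∑ j ∈ Finset.Iio v, X j) * X v : MvPolynomial (Fin n) (ZMod 2))
      = X v ^ 2 + (∑ j ∈ Finset.Iio v, X j) * X v := by
    rw [CharTwo.sub_eq_add]
  exact (Ideal.Quotient.eq).mpr (h2 ▸ h)

lemma pow_eq (v : Fin n) (e : ℕ) :
    Ideal.Quotient.mk (Uideal n) (X v ^ (e + 1))
      = Ideal.Quotient.mk (Uideal n) ((∑ j ∈ Finset.Iio v, X j) ^ e * X v) := by
  induction e with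
  | zero => simp
  | succ e ih =>
    have h1 : (X v : MvPolynomial (Fin n) (ZMod 2)) ^ (e + 1 + 1) = X v ^ (e + 1) * X v := by
      ring
    rw [h1, map_mul, ih, ← map_mul]
    have h2 : ((∑ j ∈ Finset.Iio v, X j) ^ e * X v * X v : MvPolynomial (Fin n) (ZMod 2))
        = (∑ j ∈ Finset.Iio v, X j) ^ e * X v ^ 2 := by ring
    rw [h2, map_mul, sq_eq v, ← map_mul]
    congr 1
    ring

/-- Main reduction lemma. -/
lemma main : ∀ t : ℕ, ∀ P : MvPolynomial (Fin n) (ZMod 2), VLT t P →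
    ∃ Q, SF Q ∧ VLT t Q ∧
      Ideal.Quotient.mk (Uideal n) P = Ideal.Quotient.mk (Uideal n) Q := by
  intro t
  induction t using Nat.strong_induction_on with
  | _ t IH =>
    -- monomial case
    have mono : ∀ m : Fin n →₀ ℕ, ∀ c : ZMod 2, VLT t (monomial m c) →
        ∃ Q, SF Q ∧ VLT t Q ∧
          Ideal.Quotient.mk (Uideal n) (monomial m c) = Ideal.Quotient.mk (Uideal n) Q := by
      intro m c hVLT
      rcases eq_or_ne c 0 with rfl | hc
      · exact ⟨0, by intro m hm; simp at hm, by intro m hm; simp at hm, by simp⟩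
      rcases eq_or_ne m 0 with rfl | hm0
      · refine ⟨monomial 0 c, ?_, ?_, rfl⟩
        · intro m' hm'
          rw [MvPolynomial.support_monomial] at hm'
          simp [hc] at hm'
          subst hm'
          simp
        · intro m' hm' j hj
          rw [MvPolynomial.support_monomial] at hm'
          simp [hc] at hm'
          subst hm'
          simp at hj
      -- m ≠ 0 : take the top variable v
      have hsupp : m.support.Nonempty := Finsupp.support_nonempty_iff.mpr hm0
      obtain ⟨v, hvmem, hvmax⟩ : ∃ v ∈ m.support, ∀ j ∈ m.support, j ≤ v :=
        ⟨m.support.max' hsupp, m.support.max'_mem hsupp, fun j hj => m.support.le_max' j hj⟩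
      have hvt : (v : ℕ) < t := by
        apply hVLT m _ v (Finsupp.mem_support_iff.mp hvmem)
        rw [MvPolynomial.support_monomial]
        simp [hc]
      have hve : 1 ≤ m v := Nat.one_le_iff_ne_zero.mpr (Finsupp.mem_support_iff.mp hvmem)
      have hm'lt : ∀ j ∈ (m.erase v).support, (j : ℕ) < (v : ℕ) := by
        intro j hj
        rw [Finsupp.support_erase, Finset.mem_erase] at hj
        have h1 : (j : ℕ) ≤ (v : ℕ) := hvmax j hj.2
        exact lt_of_le_of_ne h1 (fun h => hj.1 (Fin.ext h))
      have hfact : (monomial m c : MvPolynomial (Fin n) (ZMod 2))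
          = monomial (m.erase v) c * X v ^ (m v) := by
        rw [X_pow_eq_monomial, monomial_mul, mul_one, Finsupp.erase_add_single]
      have hP'VLT : VLT (v : ℕ)
          (monomial (m.erase v) c * (∑ j ∈ Finset.Iio v, X j) ^ (m v - 1)) := by
        apply VLT_mul _ (VLT_pow (sigma_VLT v) (m v - 1))
        intro μ hμ j hj
        rw [MvPolynomial.support_monomial] at hμ
        simp [hc] at hμ
        subst hμ
        exact hm'lt j (Finsupp.mem_support_iff.mpr hj)
      obtain ⟨Q', hQ'SF, hQ'VLT, hQ'eq⟩ := IH (v : ℕ) hvt _ hP'VLT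
      refine ⟨Q' * X v, ?_, ?_, ?_⟩
      · -- SF
        intro μ hμ j
        have hs := MvPolynomial.support_mul Q' (X v) hμ
        rw [Finset.mem_add] at hs
        obtain ⟨a, ha, b, hb, rfl⟩ := hs
        rw [MvPolynomial.support_X] at hb
        simp at hb
        subst hb
        rcases eq_or_ne v j with h | h
        · have hav : a j = 0 := by
            by_contra hne
            have := hQ'VLT a ha j hne
            rw [h] at this
            exact absurd this (lt_irrefl _)
          simp [Finsupp.add_apply, Finsupp.single_apply, h, hav]
        · have hle : a j ≤ 1 := hQ'SF a ha j
          simp [Finsupp.add_apply, Finsupp.single_apply, h]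
          exact hle
      · -- VLT t
        intro μ hμ j hj
        have hs := MvPolynomial.support_mul Q' (X v) hμ
        rw [Finset.mem_add] at hs
        obtain ⟨a, ha, b, hb, rfl⟩ := hs
        rw [MvPolynomial.support_X] at hb
        simp at hb
        subst hb
        rcases eq_or_ne v j with h | h
        · rw [← h]; exact hvt
        · have haj : a j ≠ 0 := by
            intro hz
            simp [Finsupp.add_apply, Finsupp.single_apply, h, hz] at hj
          exact lt_trans (hQ'VLT a ha j haj) hvt
      · -- mk equality
        have he1 : m v - 1 + 1 = m v := Nat.succ_pred_eq_of_pos hve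
        have hp := pow_eq v (m v - 1)
        rw [he1] at hp
        calc Ideal.Quotient.mk (Uideal n) (monomial m c)
            = Ideal.Quotient.mk (Uideal n) (monomial (m.erase v) c)
              * Ideal.Quotient.mk (Uideal n) (X v ^ (m v)) := by
              rw [hfact]; exact map_mul _ _ _
          _ = Ideal.Quotient.mk (Uideal n) (monomial (m.erase v) c)
              * Ideal.Quotient.mk (Uideal n) ((∑ j ∈ Finset.Iio v, X j) ^ (m v - 1) * X v) := by
              rw [hp]
          _ = Ideal.Quotient.mk (Uideal n)
              ((monomial (m.erase v) c * (∑ j ∈ Finset.Iio v, X j) ^ (m v - 1)) * X v) := by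
              rw [← map_mul]; congr 1; ring
          _ = Ideal.Quotient.mk (Uideal n) (Q' * X v) := by
              rw [map_mul, hQ'eq, ← map_mul]
    -- general case via sum over support
    intro P hP
    have key : ∀ S : Finset (Fin n →₀ ℕ), (∀ m ∈ S, m ∈ P.support) →
        ∃ Q, SF Q ∧ VLT t Q ∧
          Ideal.Quotient.mk (Uideal n) (∑ m ∈ S, monomial m (coeff m P))
            = Ideal.Quotient.mk (Uideal n) Q := by
      intro S
      classical
      induction S using Finset.induction_on with
      | empty =>
        intro _
        exact ⟨0, by intro m hm; simp at hm, by intro m hm; simp at hm, by simp⟩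
      | @insert a s' hx ih =>
        intro hS
        obtain ⟨Q1, h1SF, h1VLT, h1eq⟩ := ih fun m hm => hS m (Finset.mem_insert_of_mem hm)
        have haVLT : VLT t (monomial a (coeff a P)) := by
          intro μ hμ j hj
          rw [MvPolynomial.support_monomial] at hμ
          by_cases hca : coeff a P = 0
          · simp [hca] at hμ
          · simp [hca] at hμ
            exact hP a (hS a (Finset.mem_insert_self a s')) j (hμ ▸ hj)
        obtain ⟨Q2, h2SF, h2VLT, h2eq⟩ := mono a (coeff a P) haVLT
        refine ⟨Q2 + Q1, ?_, ?_, ?_⟩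
        · intro μ hμ j
          rcases Finset.mem_union.mp (Finsupp.support_add hμ) with h | h
          · exact h2SF μ h j
          · exact h1SF μ h j
        · intro μ hμ j hj
          rcases Finset.mem_union.mp (Finsupp.support_add hμ) with h | h
          · exact h2VLT μ h j hj
          · exact h1VLT μ h j hj
        · rw [Finset.sum_insert hx, map_add, map_add, h1eq, h2eq]
    obtain ⟨Q, hSF, hVLT, heq⟩ := key P.support (fun m hm => hm)
    exact ⟨Q, hSF, hVLT, by rwa [← MvPolynomial.as_sum P] at heq⟩

end UidealAux

/-- For `1 ≤ i ≤ n` and `k ≥ 1`, in `(ℤ/2)[u₁,…,uₙ]/𝒰ₙ` the image of `u_i^k` equals the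
image of a polynomial `Q` all of whose monomials are square-free and which involves only
the variables `u₁,…,u_i` (zero-based: only variables `X j` with `j < i`). -/
theorem stmt3 (n : ℕ) (hn : 1 ≤ n) (i : ℕ) (hi1 : 1 ≤ i) (hin : i ≤ n)
    (k : ℕ) (hk : 1 ≤ k) :
    ∃ Q : MvPolynomial (Fin n) (ZMod 2),
      (∀ m ∈ Q.support, ∀ j, m j ≤ 1) ∧
      (∀ m ∈ Q.support, ∀ j : Fin n, m j ≠ 0 → (j : ℕ) < i) ∧
      Ideal.Quotient.mk (Uideal n) ((X (⟨i - 1, by omega⟩ : Fin n)) ^ k) =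
        Ideal.Quotient.mk (Uideal n) Q := by
  have hVLT : UidealAux.VLT i
      ((X (⟨i - 1, by omega⟩ : Fin n)) ^ k : MvPolynomial (Fin n) (ZMod 2)) := by
    apply UidealAux.VLT_pow
    apply UidealAux.VLT_X
    simp only []
    show i - 1 < i
    omega
  obtain ⟨Q, hSF, hV, heq⟩ := UidealAux.main i _ hVLT
  exact ⟨Q, hSF, hV, heq⟩
end

section
/- Let n ≥ 1. The monomial u₁u₂⋯uₙ does not lie in the ideal 𝒰ₙ; equivalently, its image in the quotient ring (ℤ/2)[u₁,…,uₙ]/𝒰ₙ is nonzero. -/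
open MvPolynomial

namespace Stmt4Aux

variable (n : ℕ)

/-- `w n (k+1) = X k` (and `w n 0 = 0`). -/
noncomputable def w (k : ℕ) : MvPolynomial (Fin n) (ZMod 2) :=
  if h : 0 < k ∧ k - 1 < n then X ⟨k - 1, h.2⟩ else 0

lemma w_zero : w n 0 = 0 := by
  rw [w, dif_neg]; simp

lemma w_eq (k : ℕ) (h0 : 0 < k) (h1 : k - 1 < n) : w n k = X ⟨k - 1, h1⟩ := by
  rw [w, dif_pos ⟨h0, h1⟩]

/-- The transformed generators `X i ^ 2 - X (i-1) * X i`. -/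
noncomputable def hgen (i : Fin n) : MvPolynomial (Fin n) (ZMod 2) :=
  X i ^ 2 - w n i.val * X i

/-- Tail sum of an exponent vector. -/
def T (k : ℕ) (e : Fin n →₀ ℕ) : ℕ :=
  ∑ j ∈ Finset.univ.filter (fun j : Fin n => k ≤ j.val), e j

/-- The "good" monomials: those whose normal form is the full square-free monomial. -/
def Good (e : Fin n →₀ ℕ) : Prop :=
  T n 0 e = n ∧ ∀ k : ℕ, n - k ≤ T n k e

noncomputable def G : Finset (Fin n →₀ ℕ) :=
  @Finset.filter _ (Good n) (Classical.decPred _)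
    (Finset.Iic (Finsupp.equivFunOnFinite.symm (fun _ => n)))

/-- The linear functional summing the coefficients of good monomials. -/
noncomputable def L : MvPolynomial (Fin n) (ZMod 2) →ₗ[ZMod 2] ZMod 2 :=
  ∑ m ∈ G n, lcoeff (ZMod 2) m

lemma L_apply (p : MvPolynomial (Fin n) (ZMod 2)) :
    L n p = ∑ m ∈ G n, coeff m p := by
  simp [L, lcoeff]

lemma T_le (k : ℕ) (e : Fin n →₀ ℕ) : T n (k+1) e ≤ T n k e := by
  apply Finset.sum_le_sum_of_subset
  intro j hj
  simp only [Finset.mem_filter, Finset.mem_univ, true_and] at hj ⊢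
  omega

lemma T_zero_eq (e : Fin n →₀ ℕ) : T n 0 e = ∑ j, e j := by
  simp [T]

lemma T_add_single (k : ℕ) (e : Fin n →₀ ℕ) (i : Fin n) (c : ℕ) :
    T n k (e + Finsupp.single i c) = T n k e + if k ≤ i.val then c else 0 := by
  unfold T
  simp only [Finsupp.add_apply]
  rw [Finset.sum_add_distrib]
  congr 1
  rw [Finset.sum_congr rfl (fun j _ => Finsupp.single_apply (a := i) (b := c) (a' := j))]
  rw [Finset.sum_ite_eq]
  simp [Finset.mem_filter]

lemma mem_G (e : Fin n →₀ ℕ) : e ∈ G n ↔ Good n e := by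
  classical
  rw [G, Finset.mem_filter, Finset.mem_Iic]
  constructor
  · exact fun h => h.2
  · intro h
    refine ⟨?_, h⟩
    rw [Finsupp.le_def]
    intro j
    have h0 := h.1
    rw [T_zero_eq] at h0
    have h1 : e j ≤ ∑ j', e j' :=
      Finset.single_le_sum (fun _ _ => Nat.zero_le _) (Finset.mem_univ j)
    have h2 : (Finsupp.equivFunOnFinite.symm (fun _ => n) : Fin n →₀ ℕ) j = n := rfl
    rw [h2]
    omega

lemma not_good_zero (i : Fin n) (hi : i.val = 0) (e : Fin n →₀ ℕ) :
    ¬ Good n (e + Finsupp.single i 2) := by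
  rintro ⟨ht, hall⟩
  have h1 := hall 1
  have h2 : T n 1 e ≤ T n 0 e := T_le n 0 e
  rw [T_add_single] at ht h1
  split_ifs at ht h1 <;> omega

lemma good_iff (i i' : Fin n) (hv : 1 ≤ i.val) (hi' : i'.val = i.val - 1)
    (e : Fin n →₀ ℕ) :
    Good n (e + Finsupp.single i 2) ↔
      Good n (e + Finsupp.single i 1 + Finsupp.single i' 1) := by
  constructor
  · rintro ⟨ht, hall⟩
    refine ⟨?_, ?_⟩
    · rw [T_add_single] at ht
      rw [T_add_single, T_add_single]
      split_ifs at ht ⊢ <;> omega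
    · intro k
      have hm : T n (i.val + 1) e ≤ T n i.val e := T_le n i.val e
      by_cases h2 : k ≤ i.val
      · by_cases h1 : k ≤ i'.val
        · have hk := hall k
          rw [T_add_single] at hk
          rw [T_add_single, T_add_single]
          split_ifs at hk ⊢ <;> omega
        · have hki : k = i.val := by omega
          subst hki
          have hk1 := hall (i.val + 1)
          rw [T_add_single] at hk1
          rw [T_add_single, T_add_single]
          split_ifs at hk1 ⊢ <;> omega
      · have hk := hall k
        rw [T_add_single] at hk
        rw [T_add_single, T_add_single]
        split_ifs at hk ⊢ <;> omega
  · rintro ⟨ht, hall⟩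
    refine ⟨?_, ?_⟩
    · rw [T_add_single, T_add_single] at ht
      rw [T_add_single]
      split_ifs at ht ⊢ <;> omega
    · intro k
      have hk := hall k
      rw [T_add_single, T_add_single] at hk
      rw [T_add_single]
      split_ifs at hk ⊢ <;> omega

lemma mem_image_sub (d e : Fin n →₀ ℕ) :
    e ∈ (Finset.filter (fun m => d ≤ m) (G n)).image (fun m => m - d) ↔
      e + d ∈ G n := by
  simp only [Finset.mem_image, Finset.mem_filter]
  constructor
  · rintro ⟨m, ⟨hm, hdm⟩, rfl⟩
    rwa [tsub_add_cancel_of_le hdm]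
  · intro h
    exact ⟨e + d, ⟨h, le_add_self⟩, add_tsub_cancel_right e d⟩

lemma L_mul_monomial (d : Fin n →₀ ℕ) (q : MvPolynomial (Fin n) (ZMod 2)) :
    L n (q * monomial d 1) =
      ∑ e ∈ (Finset.filter (fun m => d ≤ m) (G n)).image (fun m => m - d),
        coeff e q := by
  rw [L_apply]
  rw [Finset.sum_image (by
    intro x hx y hy hxy
    rw [Finset.mem_coe, Finset.mem_filter] at hx hy
    have := congrArg (· + d) hxy
    simpa [tsub_add_cancel_of_le hx.2, tsub_add_cancel_of_le hy.2] using this)]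
  rw [Finset.sum_filter]
  apply Finset.sum_congr rfl
  intro m _
  rw [coeff_mul_monomial']
  split_ifs <;> simp

lemma L_mul_hgen (q : MvPolynomial (Fin n) (ZMod 2)) (i : Fin n) :
    L n (q * hgen n i) = 0 := by
  rcases Nat.eq_zero_or_pos i.val with hi | hi
  · -- hgen n i = X i ^ 2
    have hw : w n i.val = 0 := by rw [hi, w_zero]
    have : q * hgen n i = q * monomial (Finsupp.single i 2) 1 := by
      rw [hgen, hw, X_pow_eq_monomial]; ring
    rw [this, L_mul_monomial]
    apply Finset.sum_eq_zero
    intro e he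
    exfalso
    rw [mem_image_sub, mem_G] at he
    exact not_good_zero n i hi e he
  · -- i.val ≥ 1
    have hlt : i.val - 1 < n := by omega
    set i' : Fin n := ⟨i.val - 1, hlt⟩ with hi'def
    have hw : w n i.val = X i' := w_eq n i.val hi hlt
    have hx2 : (X i : MvPolynomial (Fin n) (ZMod 2)) ^ 2 =
        monomial (Finsupp.single i 2) 1 := X_pow_eq_monomial
    have hxx : w n i.val * X i =
        monomial (Finsupp.single i 1 + Finsupp.single i' 1) 1 := by
      rw [hw,
        show (X i' : MvPolynomial (Fin n) (ZMod 2)) = monomial (Finsupp.single i' 1) 1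
          from rfl,
        show (X i : MvPolynomial (Fin n) (ZMod 2)) = monomial (Finsupp.single i 1) 1
          from rfl,
        monomial_mul, one_mul, add_comm]
    have : q * hgen n i =
        q * monomial (Finsupp.single i 2) 1 -
          q * monomial (Finsupp.single i 1 + Finsupp.single i' 1) 1 := by
      rw [hgen, hx2, hxx]; ring
    rw [this, map_sub, L_mul_monomial, L_mul_monomial]
    have hset : (Finset.filter (fun m => Finsupp.single i 2 ≤ m) (G n)).image
          (fun m => m - Finsupp.single i 2) =
        (Finset.filter (fun m => Finsupp.single i 1 + Finsupp.single i' 1 ≤ m)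
            (G n)).image
          (fun m => m - (Finsupp.single i 1 + Finsupp.single i' 1)) := by
      ext e
      rw [mem_image_sub, mem_image_sub, mem_G, mem_G]
      have h2 : Finsupp.single i 2 = Finsupp.single i 1 + Finsupp.single i 1 := by
        rw [← Finsupp.single_add]
      rw [← add_assoc]
      exact good_iff n i i' hi rfl e
    rw [hset, sub_self]

lemma L_span_eq_zero (x : MvPolynomial (Fin n) (ZMod 2))
    (hx : x ∈ Ideal.span (Set.range (hgen n))) : L n x = 0 := by
  rw [Ideal.span, Submodule.mem_span_range_iff_exists_fun] at hx
  obtain ⟨c, rfl⟩ := hx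
  rw [map_sum]
  apply Finset.sum_eq_zero
  intro i _
  rw [smul_eq_mul]
  exact L_mul_hgen n (c i) i

/-- Multiplying the product of an initial-segment-closed set of variables by one of
them lands in the ideal. -/
lemma prod_mul_X_mem (v : ℕ) : ∀ (i : Fin n), i.val = v →
    ∀ (S : Finset (Fin n)), (∀ m : Fin n, m.val ≤ i.val → m ∈ S) →
    (∏ t ∈ S, X t) * X i ∈ Ideal.span (Set.range (hgen n)) := by
  induction v using Nat.strong_induction_on with
  | _ v ih =>
    intro i hiv S hS
    have hiS : i ∈ S := hS i le_rfl
    have hsplit : (∏ t ∈ S, X t) = X i * ∏ t ∈ S.erase i, X t :=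
      (Finset.mul_prod_erase S (fun t => (X t : MvPolynomial (Fin n) (ZMod 2))) hiS).symm
    have key : (∏ t ∈ S, X t) * X i =
        (∏ t ∈ S.erase i, X t) * hgen n i + (∏ t ∈ S, X t) * w n i.val := by
      rw [hsplit, hgen]; ring
    rw [key]
    apply Ideal.add_mem
    · exact Ideal.mul_mem_left _ _ (Ideal.subset_span ⟨i, rfl⟩)
    · rcases Nat.eq_zero_or_pos i.val with h0 | h0
      · rw [h0, w_zero, mul_zero]; exact Ideal.zero_mem _
      · have hlt : i.val - 1 < n := by omega
        set i' : Fin n := ⟨i.val - 1, hlt⟩ with hi'def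
        have hi'v : i'.val = i.val - 1 := rfl
        have hw : w n i.val = X i' := w_eq n i.val h0 hlt
        rw [hw]
        exact ih (i.val - 1) (by omega) i' rfl S
          (fun m hm => hS m (by rw [hi'v] at hm; omega))

lemma prod_sub_mem (k : ℕ) (hk : k ≤ n) :
    (∏ j ∈ Finset.univ.filter (fun j : Fin n => j.val < k), (X j - w n j.val)) -
      (∏ j ∈ Finset.univ.filter (fun j : Fin n => j.val < k), X j) ∈
      Ideal.span (Set.range (hgen n)) := by
  induction k with
  | zero =>
      simp only [Nat.not_lt_zero, Finset.filter_false, Finset.prod_empty]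
      simp
  | succ k ihk =>
      have hkn : k < n := hk
      set ik : Fin n := ⟨k, hkn⟩
      have hikv : ik.val = k := rfl
      have hfilter : Finset.univ.filter (fun j : Fin n => j.val < k + 1) =
          insert ik (Finset.univ.filter (fun j : Fin n => j.val < k)) := by
        ext j
        simp only [Finset.mem_filter, Finset.mem_univ, true_and, Finset.mem_insert]
        constructor
        · intro h
          rcases Nat.lt_or_ge j.val k with h' | h'
          · right; exact h'
          · left; exact Fin.ext (by rw [hikv]; omega)
        · rintro (rfl | h)
          · rw [hikv]; omega
          · omega
      have hnot : ik ∉ Finset.univ.filter (fun j : Fin n => j.val < k) := by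
        simp only [Finset.mem_filter, Finset.mem_univ, true_and, hikv]
        omega
      rw [hfilter, Finset.prod_insert hnot, Finset.prod_insert hnot]
      set P := ∏ j ∈ Finset.univ.filter (fun j : Fin n => j.val < k), (X j - w n j.val)
      set M := ∏ j ∈ Finset.univ.filter (fun j : Fin n => j.val < k),
        (X j : MvPolynomial (Fin n) (ZMod 2))
      have hikv : ik.val = k := rfl
      have key : (X ik - w n ik.val) * P - X ik * M =
          (P - M) * (X ik - w n ik.val) - M * w n ik.val := by ring
      rw [key]
      apply Ideal.sub_mem
      · exact Ideal.mul_mem_right _ _ (ihk (by omega))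
      · rcases Nat.eq_zero_or_pos ik.val with h0 | h0
        · rw [h0, w_zero, mul_zero]; exact Ideal.zero_mem _
        · have hlt : ik.val - 1 < n := by rw [hikv] at h0 ⊢; omega
          set i' : Fin n := ⟨ik.val - 1, hlt⟩
          have hw : w n ik.val = X i' := w_eq n ik.val h0 hlt
          have hi'v : i'.val = k - 1 := by simp [i', hikv]
          rw [hw]
          exact prod_mul_X_mem n i'.val i' rfl _
            (fun m hm => by
              simp only [Finset.mem_filter, Finset.mem_univ, true_and]
              rw [hi'v] at hm
              rw [hikv] at h0
              omega)

/-- The full product of the transformed variables is the full monomial modulo the ideal. -/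
lemma prod_sub_mem_univ :
    (∏ j : Fin n, (X j - w n j.val)) - (∏ j : Fin n, (X j : MvPolynomial (Fin n) (ZMod 2))) ∈
      Ideal.span (Set.range (hgen n)) := by
  have := prod_sub_mem n n le_rfl
  have hfull : Finset.univ.filter (fun j : Fin n => j.val < n) = Finset.univ := by
    ext j; simp [j.isLt]
  rwa [hfull] at this

noncomputable def fullE : Fin n →₀ ℕ := Finsupp.equivFunOnFinite.symm (fun _ => 1)

lemma good_fullE : Good n (fullE n) := by
  have happ : ∀ j : Fin n, fullE n j = 1 := fun j => rfl
  have hT : ∀ k : ℕ, T n k (fullE n) =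
      (Finset.univ.filter (fun j : Fin n => k ≤ j.val)).card := by
    intro k
    unfold T
    rw [Finset.sum_congr rfl (fun j _ => happ j), Finset.sum_const, smul_eq_mul, mul_one]
  have hcard : ∀ k : ℕ, n - k ≤ (Finset.univ.filter (fun j : Fin n => k ≤ j.val)).card := by
    intro k
    have h1 : (Finset.univ.filter (fun j : Fin n => k ≤ j.val)).card +
        (Finset.univ.filter (fun j : Fin n => ¬ k ≤ j.val)).card = n := by
      rw [Finset.card_filter_add_card_filter_not, Finset.card_univ,
        Fintype.card_fin]
    have h2 : (Finset.univ.filter (fun j : Fin n => ¬ k ≤ j.val)).card ≤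
        (Finset.range k).card := by
      apply Finset.card_le_card_of_injOn (fun j => j.val)
      · intro j hj; simp at hj ⊢; omega
      · exact Fin.val_injective.injOn
    rw [Finset.card_range] at h2
    omega
  constructor
  · rw [hT 0]
    have h0 : Finset.univ.filter (fun j : Fin n => 0 ≤ j.val) = Finset.univ :=
      Finset.filter_true_of_mem (fun _ _ => Nat.zero_le _)
    rw [h0, Finset.card_univ, Fintype.card_fin]
  · intro k; rw [hT k]; exact hcard k

lemma L_prod_X : L n (∏ j : Fin n, (X j : MvPolynomial (Fin n) (ZMod 2))) = 1 := by
  have hsupp : (fullE n).support = Finset.univ := by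
    ext j
    simp only [Finsupp.mem_support_iff, Finset.mem_univ, iff_true]
    show (1 : ℕ) ≠ 0
    exact one_ne_zero
  have hprod : (∏ j : Fin n, (X j : MvPolynomial (Fin n) (ZMod 2))) =
      monomial (fullE n) 1 := by
    rw [← prod_X_pow_eq_monomial, hsupp]
    apply Finset.prod_congr rfl
    intro j _
    have : fullE n j = 1 := rfl
    rw [this, pow_one]
  rw [hprod, L_apply]
  rw [Finset.sum_congr rfl (fun m _ => coeff_monomial m (fullE n) (1 : ZMod 2))]
  rw [Finset.sum_ite_eq]
  rw [if_pos ((mem_G n (fullE n)).2 (good_fullE n))]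

end Stmt4Aux

/-- The monomial `u₁u₂⋯uₙ` does not lie in the ideal `𝒰ₙ`; equivalently, its image in the
quotient ring `(ℤ/2)[u₁,…,uₙ]/𝒰ₙ` is nonzero. -/
theorem stmt4 (n : ℕ) (hn : 1 ≤ n) :
    (∏ i : Fin n, X i : MvPolynomial (Fin n) (ZMod 2)) ∉ Uideal n := by
  open Stmt4Aux in
  intro hP
  -- the substitution X i ↦ X i - X (i-1)
  set ρ : MvPolynomial (Fin n) (ZMod 2) →ₐ[ZMod 2] MvPolynomial (Fin n) (ZMod 2) :=
    aeval (fun i : Fin n => X i - w n i.val) with hρ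
  -- X j = w n (j.val + 1)
  have hXw : ∀ j : Fin n, (X j : MvPolynomial (Fin n) (ZMod 2)) = w n (j.val + 1) := by
    intro j
    rw [w_eq n (j.val + 1) (Nat.succ_pos _) (by simp)]
    rfl
  -- telescoping
  have htel : ∀ i : Fin n, (∑ j ∈ Finset.Iio i, (X j - w n j.val)) = w n i.val := by
    intro i
    have hbij : (∑ j ∈ Finset.Iio i, ((X j : MvPolynomial (Fin n) (ZMod 2)) - w n j.val)) =
        ∑ k ∈ Finset.range i.val, (w n (k + 1) - w n k) := by
      refine Finset.sum_nbij' (fun j : Fin n => (j : ℕ))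
        (fun k : ℕ => if h : k < n then (⟨k, h⟩ : Fin n) else i) ?_ ?_ ?_ ?_ ?_
      · intro j hj
        simp only [Finset.mem_Iio] at hj
        simpa using hj
      · intro k hk
        simp only [Finset.mem_range] at hk
        have hkn : k < n := lt_trans hk i.isLt
        simp only [Finset.mem_Iio]
        rw [dif_pos hkn]
        exact hk
      · intro j _
        simp [j.isLt]
      · intro k hk
        simp only [Finset.mem_range] at hk
        have hkn : k < n := lt_trans hk i.isLt
        simp [hkn]
      · intro j _
        rw [← hXw j]
    rw [hbij, Finset.sum_range_sub (fun k => w n k), w_zero, sub_zero]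
  -- ρ maps the generators of Uideal to hgen
  have hρgen : ∀ i : Fin n,
      ρ (X i ^ 2 + (∑ j ∈ Finset.Iio i, X j) * X i) = hgen n i := by
    intro i
    simp only [map_add, map_mul, map_pow, map_sum, hρ, aeval_X]
    rw [htel i, hgen]
    ring
  -- image of the product
  have hρP : ρ (∏ i : Fin n, X i) = ∏ i : Fin n, (X i - w n i.val) := by
    rw [map_prod]
    simp [hρ]
  -- membership in the transformed ideal
  have hmem : ρ (∏ i : Fin n, X i) ∈ Ideal.span (Set.range (hgen n)) := by
    have h1 : ρ (∏ i : Fin n, X i) ∈ Ideal.map (ρ : MvPolynomial (Fin n) (ZMod 2) →+*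
        MvPolynomial (Fin n) (ZMod 2)) (Uideal n) :=
      Ideal.mem_map_of_mem _ hP
    rw [Uideal, Ideal.map_span] at h1
    have himg : (ρ : MvPolynomial (Fin n) (ZMod 2) →+* MvPolynomial (Fin n) (ZMod 2)) ''
        (Set.range fun i : Fin n => X i ^ 2 + (∑ j ∈ Finset.Iio i, X j) * X i) =
        Set.range (hgen n) := by
      rw [← Set.range_comp]
      have hfun : ((ρ : MvPolynomial (Fin n) (ZMod 2) →+* MvPolynomial (Fin n) (ZMod 2)) ∘
          fun i : Fin n => X i ^ 2 + (∑ j ∈ Finset.Iio i, X j) * X i) = hgen n :=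
        funext fun i => by
          simp only [Function.comp_apply, RingHom.coe_coe]; exact hρgen i
      rw [hfun]
    rwa [himg] at h1
  -- apply the functional L
  have hL0 : L n (ρ (∏ i : Fin n, X i)) = 0 := L_span_eq_zero n _ hmem
  have hL1 : L n (ρ (∏ i : Fin n, X i)) = 1 := by
    rw [hρP]
    have hsplit : (∏ i : Fin n, ((X i : MvPolynomial (Fin n) (ZMod 2)) - w n i.val)) =
        ((∏ j : Fin n, (X j - w n j.val)) - ∏ j : Fin n, X j) + ∏ j : Fin n, X j := by
      ring
    rw [hsplit, map_add, L_span_eq_zero n _ (prod_sub_mem_univ n), L_prod_X, zero_add]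
  rw [hL0] at hL1
  exact absurd hL1 (by decide)
end

section
/- Let n ≥ 1. The ℤ/2-algebra endomorphism φ of (ℤ/2)[x₁,…,xₙ] determined by φ(x_i) = x₁ + x₂ + ⋯ + x_i maps the ideal 𝒯ₙ into the ideal 𝒰ₙ (where both ideals are taken in (ℤ/2)[x₁,…,xₙ], with t_i and u_i both interpreted as x_i), and φ induces an isomorphism of rings (ℤ/2)[x₁,…,xₙ]/𝒯ₙ ≅ (ℤ/2)[x₁,…,xₙ]/𝒰ₙ. -/
open MvPolynomial

noncomputable def phiHom (n : ℕ) :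
    MvPolynomial (Fin n) (ZMod 2) →ₐ[ZMod 2] MvPolynomial (Fin n) (ZMod 2) :=
  aeval fun i : Fin n => ∑ j ∈ Finset.Iic i, X j

noncomputable def psiHom (n : ℕ) :
    MvPolynomial (Fin n) (ZMod 2) →ₐ[ZMod 2] MvPolynomial (Fin n) (ZMod 2) :=
  aeval fun i : Fin n =>
    X i + if (i : ℕ) = 0 then 0
      else X (⟨(i : ℕ) - 1, Nat.lt_of_le_of_lt (Nat.sub_le _ _) i.isLt⟩ : Fin n)

lemma two_eq_zero' (n : ℕ) : (2 : MvPolynomial (Fin n) (ZMod 2)) = 0 :=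
  CharP.cast_eq_zero _ 2

lemma Iio_succ_fin (n k : ℕ) (h : k + 1 < n) :
    Finset.Iio (⟨k + 1, h⟩ : Fin n) =
      Finset.Iic (⟨k, Nat.lt_of_succ_lt h⟩ : Fin n) := by
  ext j
  simp only [Finset.mem_Iio, Finset.mem_Iic, Fin.lt_def, Fin.le_def]
  omega

lemma Iic_eq_insert (n : ℕ) (i : Fin n) :
    Finset.Iic i = insert i (Finset.Iio i) := (Finset.Iio_insert i).symm

lemma sum_Iic_split (n : ℕ) (i : Fin n) :
    (∑ j ∈ Finset.Iic i, (X j : MvPolynomial (Fin n) (ZMod 2)))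
      = (∑ j ∈ Finset.Iio i, X j) + X i := by
  rw [Iic_eq_insert, Finset.sum_insert (by simp), add_comm]

lemma psi_phi_X (n k : ℕ) (h : k < n) :
    psiHom n (phiHom n (X (⟨k, h⟩ : Fin n))) = X (⟨k, h⟩ : Fin n) := by
  induction k with
  | zero =>
    simp only [phiHom, psiHom, aeval_X]
    have : Finset.Iic (⟨0, h⟩ : Fin n) = {⟨0, h⟩} := by
      ext j
      simp only [Finset.mem_Iic, Finset.mem_singleton, Fin.le_def, Fin.ext_iff]
      omega
    simp [this]
  | succ k ih =>
    have hk : k < n := Nat.lt_of_succ_lt h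
    have ih' := ih hk
    simp only [phiHom, aeval_X] at ih' ⊢
    rw [Iic_eq_insert, Finset.sum_insert (by simp), map_add, Iio_succ_fin n k h, ih']
    simp only [psiHom, aeval_X, Nat.succ_ne_zero, if_neg, if_false, ite_false,
      Nat.add_sub_cancel]
    have h2 := two_eq_zero' n
    linear_combination X (⟨k, hk⟩ : Fin n) * h2

lemma phi_psi_X (n : ℕ) (i : Fin n) :
    phiHom n (psiHom n (X i)) = X i := by
  obtain ⟨k, h⟩ := i
  simp only [psiHom, aeval_X, map_add]
  cases k with
  | zero =>
    simp only [if_pos rfl, map_zero, add_zero, phiHom, aeval_X]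
    have : Finset.Iic (⟨0, h⟩ : Fin n) = {⟨0, h⟩} := by
      ext j
      simp only [Finset.mem_Iic, Finset.mem_singleton, Fin.le_def, Fin.ext_iff]
      omega
    simp [this]
  | succ k =>
    have hk : k < n := Nat.lt_of_succ_lt h
    simp only [Nat.succ_ne_zero, if_neg, if_false, ite_false, Nat.add_sub_cancel,
      phiHom, aeval_X]
    have h1 : Finset.Iio (⟨k + 1, h⟩ : Fin n) = Finset.Iic (⟨k, hk⟩ : Fin n) :=
      Iio_succ_fin n k h
    rw [sum_Iic_split, h1]
    have h2 := two_eq_zero' n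
    linear_combination (∑ j ∈ Finset.Iic (⟨k, hk⟩ : Fin n),
      (X j : MvPolynomial (Fin n) (ZMod 2))) * h2

noncomputable def phiEquiv (n : ℕ) :
    MvPolynomial (Fin n) (ZMod 2) ≃ₐ[ZMod 2] MvPolynomial (Fin n) (ZMod 2) :=
  AlgEquiv.ofAlgHom (phiHom n) (psiHom n)
    (by apply MvPolynomial.algHom_ext; intro i; exact phi_psi_X n i)
    (by
      apply MvPolynomial.algHom_ext
      intro i
      obtain ⟨k, h⟩ := i
      exact psi_phi_X n k h)

lemma phi_genT (n : ℕ) (i : Fin n) :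
    phiHom n (X i ^ 2 +
      if (i : ℕ) = 0 then 0
      else X (⟨(i : ℕ) - 1, Nat.lt_of_le_of_lt (Nat.sub_le _ _) i.isLt⟩ : Fin n) * X i)
    = X i ^ 2 + (∑ j ∈ Finset.Iio i, X j) * X i := by
  obtain ⟨k, h⟩ := i
  cases k with
  | zero =>
    have hIio : Finset.Iio (⟨0, h⟩ : Fin n) = ∅ := by
      ext j; simp [Fin.lt_def]
    have hIic : Finset.Iic (⟨0, h⟩ : Fin n) = {⟨0, h⟩} := by
      ext j
      simp only [Finset.mem_Iic, Finset.mem_singleton, Fin.le_def, Fin.ext_iff]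
      omega
    simp [phiHom, hIio, hIic]
  | succ k =>
    have hk : k < n := Nat.lt_of_succ_lt h
    simp only [Nat.succ_ne_zero, if_neg, if_false, ite_false, Nat.add_sub_cancel,
      phiHom, map_add, map_pow, map_mul, aeval_X]
    have h1 : Finset.Iio (⟨k + 1, h⟩ : Fin n) = Finset.Iic (⟨k, hk⟩ : Fin n) :=
      Iio_succ_fin n k h
    rw [sum_Iic_split (i := (⟨k + 1, h⟩ : Fin n)), h1]
    have h2 := two_eq_zero' n
    set T := ∑ j ∈ Finset.Iic (⟨k, hk⟩ : Fin n), (X j : MvPolynomial (Fin n) (ZMod 2))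
    linear_combination (T ^ 2 + T * X (⟨k + 1, h⟩ : Fin n)) * h2

lemma map_T_eq_U (n : ℕ) :
    Ideal.map ((phiEquiv n : MvPolynomial (Fin n) (ZMod 2) ≃+*
      MvPolynomial (Fin n) (ZMod 2)) : MvPolynomial (Fin n) (ZMod 2) →+*
      MvPolynomial (Fin n) (ZMod 2)) (Tideal n) = Uideal n := by
  unfold Tideal Uideal
  rw [Ideal.map_span, ← Set.range_comp]
  refine congrArg Ideal.span (congrArg Set.range (funext fun i => ?_))
  rw [Function.comp_apply, ← phi_genT n i]
  rfl

/-- The ℤ/2-algebra endomorphism `φ` of `(ℤ/2)[x₁,…,xₙ]` determined by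
`φ(x_i) = x₁ + ⋯ + x_i` maps `𝒯ₙ` into `𝒰ₙ` and induces a ring isomorphism
`(ℤ/2)[x₁,…,xₙ]/𝒯ₙ ≅ (ℤ/2)[x₁,…,xₙ]/𝒰ₙ`. -/
theorem stmt6 (n : ℕ) (hn : 1 ≤ n) :
    (∀ p ∈ Tideal n,
      (aeval fun i : Fin n => (∑ j ∈ Finset.Iic i, X j : MvPolynomial (Fin n) (ZMod 2))) p
        ∈ Uideal n) ∧
    ∃ e : (MvPolynomial (Fin n) (ZMod 2) ⧸ Tideal n) ≃+*
        (MvPolynomial (Fin n) (ZMod 2) ⧸ Uideal n),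
      ∀ p : MvPolynomial (Fin n) (ZMod 2),
        e (Ideal.Quotient.mk (Tideal n) p) =
          Ideal.Quotient.mk (Uideal n)
            ((aeval fun i : Fin n =>
              (∑ j ∈ Finset.Iic i, X j : MvPolynomial (Fin n) (ZMod 2))) p) := by
  constructor
  · intro p hp
    have := Ideal.mem_map_of_mem ((phiEquiv n : MvPolynomial (Fin n) (ZMod 2) ≃+*
      MvPolynomial (Fin n) (ZMod 2)) : MvPolynomial (Fin n) (ZMod 2) →+*
      MvPolynomial (Fin n) (ZMod 2)) hp
    rw [map_T_eq_U n] at this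
    exact this
  · refine ⟨Ideal.quotientEquiv (Tideal n) (Uideal n)
      (phiEquiv n : MvPolynomial (Fin n) (ZMod 2) ≃+* MvPolynomial (Fin n) (ZMod 2))
      (map_T_eq_U n).symm, fun p => ?_⟩
    exact Ideal.quotientEquiv_mk _ _ _ _ p
end

section
/- Let n ≥ 1. The monomial t₁t₂⋯tₙ does not lie in the ideal 𝒯ₙ; equivalently, its image in the quotient ring (ℤ/2)[t₁,…,tₙ]/𝒯ₙ is nonzero. -/
open MvPolynomial

noncomputable section

/-- partial sum of exponents with index ≤ k -/
def Spart (n : ℕ) (d : Fin n →₀ ℕ) (k : ℕ) : ℕ :=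
  ∑ i ∈ Finset.univ.filter (fun i : Fin n => (i : ℕ) ≤ k), d i

def good (n : ℕ) (d : Fin n →₀ ℕ) : Prop :=
  (∑ i, d i = n) ∧ ∀ k : ℕ, Spart n d k ≤ k + 1

open Classical in
def F (n : ℕ) (p : MvPolynomial (Fin n) (ZMod 2)) : ZMod 2 :=
  Finsupp.sum (AddMonoidAlgebra.coeff p) (fun d c => if good n d then c else 0)

open Classical in
lemma F_add (n : ℕ) (p q : MvPolynomial (Fin n) (ZMod 2)) :
    F n (p + q) = F n p + F n q := by
  classical
  unfold F
  rw [AddMonoidAlgebra.coeff_add]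
  exact Finsupp.sum_add_index' (fun d => by simp) (fun d c1 c2 => by split_ifs <;> simp)

open Classical in
lemma F_monomial (n : ℕ) (d : Fin n →₀ ℕ) (c : ZMod 2) :
    F n (monomial d c) = if good n d then c else 0 := by
  classical
  show Finsupp.sum (Finsupp.single d c) _ = _
  rw [Finsupp.sum_single_index]
  simp

lemma Spart_add (n : ℕ) (d e : Fin n →₀ ℕ) (k : ℕ) :
    Spart n (d + e) k = Spart n d k + Spart n e k := by
  simp [Spart, Finset.sum_add_distrib]

lemma Spart_single (n : ℕ) (i : Fin n) (c k : ℕ) :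
    Spart n (Finsupp.single i c) k = if (i : ℕ) ≤ k then c else 0 := by
  classical
  simp only [Spart, Finsupp.single_apply]
  rw [Finset.sum_ite_eq]
  simp

lemma tot_add (n : ℕ) (d e : Fin n →₀ ℕ) :
    ∑ i, (d + e) i = (∑ i, d i) + ∑ i, e i := by
  simp [Finset.sum_add_distrib]

lemma tot_single (n : ℕ) (i : Fin n) (c : ℕ) :
    ∑ j, (Finsupp.single i c) j = c := by
  classical
  simp [Finsupp.single_apply]

lemma F_zero (n : ℕ) : F n 0 = 0 := by
  classical
  exact Finsupp.sum_zero_index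

def Fhom (n : ℕ) : MvPolynomial (Fin n) (ZMod 2) →+ ZMod 2 :=
  ⟨⟨F n, F_zero n⟩, fun x y => F_add n x y⟩

lemma Spart_mono (n : ℕ) (d : Fin n →₀ ℕ) {k k' : ℕ} (h : k ≤ k') :
    Spart n d k ≤ Spart n d k' := by
  apply Finset.sum_le_sum_of_subset
  intro x
  simp only [Finset.mem_filter, Finset.mem_univ, true_and]
  omega

lemma good_iff (n : ℕ) (i j : Fin n) (hj : (j : ℕ) + 1 = (i : ℕ)) (d : Fin n →₀ ℕ) :
    good n (d + Finsupp.single i 2) ↔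
      good n (d + (Finsupp.single j 1 + Finsupp.single i 1)) := by
  unfold good
  simp only [tot_add, tot_single, Spart_add, Spart_single]
  constructor
  · rintro ⟨h1, h2⟩
    refine ⟨by omega, fun k => ?_⟩
    have hii := h2 (i : ℕ)
    have hki : Spart n d k ≤ Spart n d (i : ℕ) ∨ ((i:ℕ) ≤ k) := by
      by_cases hik : (i:ℕ) ≤ k
      · right; exact hik
      · left; exact Spart_mono n d (by omega)
    have hk := h2 k
    split_ifs at * <;> omega
  · rintro ⟨h1, h2⟩
    refine ⟨by omega, fun k => ?_⟩
    have hk := h2 k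
    have hji : (j:ℕ) ≤ k ∨ ¬ ((i:ℕ) ≤ k) := by omega
    split_ifs at * <;> omega

open Classical in
lemma F_monomial_mul_gen (n : ℕ) (d : Fin n →₀ ℕ) (c : ZMod 2) (i : Fin n) :
    F n (monomial d c * (X i ^ 2 +
      if (i : ℕ) = 0 then 0
      else X (⟨(i : ℕ) - 1, Nat.lt_of_le_of_lt (Nat.sub_le _ _) i.isLt⟩ : Fin n) * X i)) = 0 := by
  classical
  split_ifs with h
  · rw [add_zero, X_pow_eq_monomial, monomial_mul, mul_one, F_monomial, if_neg]
    rintro ⟨-, h2⟩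
    have := h2 0
    rw [Spart_add, Spart_single, if_pos (by omega)] at this
    omega
  · set j : Fin n := ⟨(i : ℕ) - 1, Nat.lt_of_le_of_lt (Nat.sub_le _ _) i.isLt⟩ with hjdef
    have hj : (j : ℕ) + 1 = (i : ℕ) := by simp [hjdef]; omega
    have hXX : (X j * X i : MvPolynomial (Fin n) (ZMod 2)) =
        monomial (Finsupp.single j 1 + Finsupp.single i 1) 1 := by
      rw [← pow_one (X j), ← pow_one (X i), X_pow_eq_monomial, X_pow_eq_monomial,
        monomial_mul, one_mul]
    rw [mul_add, X_pow_eq_monomial, monomial_mul, mul_one, hXX, monomial_mul, mul_one,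
      F_add, F_monomial, F_monomial]
    by_cases hg : good n (d + Finsupp.single i 2)
    · rw [if_pos hg, if_pos ((good_iff n i j hj d).mp hg)]
      exact CharTwo.add_self_eq_zero c
    · rw [if_neg hg, if_neg (fun hg2 => hg ((good_iff n i j hj d).mpr hg2))]
      simp

open Classical in
lemma F_prod (n : ℕ) (hn : 1 ≤ n) :
    F n (∏ i : Fin n, X i : MvPolynomial (Fin n) (ZMod 2)) = 1 := by
  classical
  set d : Fin n →₀ ℕ := Finsupp.equivFunOnFinite.symm (fun _ => 1) with hd
  have hdapp : ∀ x : Fin n, d x = 1 := fun x => rfl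
  have hsupp : d.support = Finset.univ := by
    apply Finset.eq_univ_iff_forall.mpr
    intro x
    rw [Finsupp.mem_support_iff, hdapp]
    omega
  have hprod : (∏ i : Fin n, X i : MvPolynomial (Fin n) (ZMod 2)) = monomial d 1 := by
    rw [← prod_X_pow_eq_monomial, hsupp]
    apply Finset.prod_congr rfl
    intro x _
    rw [hdapp, pow_one]
  rw [hprod, F_monomial, if_pos]
  constructor
  · simp [hdapp]
  · intro k
    have : Spart n d k = (Finset.univ.filter (fun i : Fin n => (i : ℕ) ≤ k)).card := by
      unfold Spart
      rw [Finset.card_eq_sum_ones]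
      exact Finset.sum_congr rfl (fun x _ => hdapp x)
    rw [this]
    have : (Finset.univ.filter (fun i : Fin n => (i : ℕ) ≤ k)).card ≤ (Finset.range (k+1)).card := by
      exact Finset.card_le_card_of_injOn (fun i => (i : ℕ)) (by
        intro x hx
        simp only [Finset.coe_filter, Finset.mem_filter, Finset.mem_univ, true_and, Set.mem_setOf_eq] at hx
        simp only [Finset.coe_range, Set.mem_Iio, Finset.mem_range]
        omega) (by
        intro a _ b _ hab
        exact Fin.val_injective hab)
    simpa using this

/-- The monomial `t₁t₂⋯tₙ` does not lie in the ideal `𝒯ₙ`; equivalently, its image in the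
quotient ring `(ℤ/2)[t₁,…,tₙ]/𝒯ₙ` is nonzero. -/
theorem stmt7 (n : ℕ) (hn : 1 ≤ n) :
    (∏ i : Fin n, X i : MvPolynomial (Fin n) (ZMod 2)) ∉ Tideal n := by
  intro hmem
  rw [Tideal, Ideal.mem_span_range_iff_exists_fun] at hmem
  obtain ⟨c, hc⟩ := hmem
  have h0 : F n (∏ i : Fin n, X i : MvPolynomial (Fin n) (ZMod 2)) = 0 := by
    rw [← hc]
    rw [show F n = ⇑(Fhom n) from rfl, map_sum]
    apply Finset.sum_eq_zero
    intro i _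
    show F n _ = 0
    conv_lhs => rw [(c i).as_sum, Finset.sum_mul]
    rw [show F n = ⇑(Fhom n) from rfl, map_sum]
    apply Finset.sum_eq_zero
    intro d _
    exact F_monomial_mul_gen n d _ i
  rw [F_prod n hn] at h0
  exact one_ne_zero h0
end
end

section
/- Let n ≥ 1 and let P ∈ (ℤ/2)[t₁,…,tₙ] be a polynomial all of whose monomials are square-free and such that P(1,1,…,1) = 1 in ℤ/2 (i.e., P has an odd number of monomials). Then P does not lie in the ideal 𝒯ₙ; equivalently, the image of P in (ℤ/2)[t₁,…,tₙ]/𝒯ₙ is nonzero. -/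
open MvPolynomial

open Finset in
/-- Prefix sum of an exponent vector up to index `j`. -/
def preS {n : ℕ} (j : Fin n) (m : Fin n →₀ ℕ) : ℕ := ∑ l ∈ Finset.Iic j, m l

/-- "Admissible" exponent vectors: every prefix sum is at most `j+1`. -/
def okv {n : ℕ} (m : Fin n →₀ ℕ) : Prop := ∀ j : Fin n, preS j m ≤ (j : ℕ) + 1

open scoped Classical in
/-- Weight of an exponent vector. -/
noncomputable def wv {n : ℕ} (m : Fin n →₀ ℕ) : ZMod 2 := if okv m then 1 else 0

/-- The parity linear functional. -/
noncomputable def Lfun {n : ℕ} : MvPolynomial (Fin n) (ZMod 2) →+ ZMod 2 :=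
  (Finsupp.liftAddHom (fun m => AddMonoidHom.mulRight (wv m))).comp
    AddMonoidAlgebra.coeffAddEquiv.toAddMonoidHom

lemma Lfun_monomial {n : ℕ} (m : Fin n →₀ ℕ) (c : ZMod 2) :
    Lfun (monomial m c) = c * wv m := by
  rw [← single_eq_monomial]
  exact Finsupp.liftAddHom_apply_single _ _ _

lemma preS_add {n : ℕ} (j : Fin n) (a b : Fin n →₀ ℕ) :
    preS j (a + b) = preS j a + preS j b := by
  simp [preS, Finset.sum_add_distrib]

lemma preS_single {n : ℕ} (j i : Fin n) (c : ℕ) :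
    preS j (Finsupp.single i c) = if i ≤ j then c else 0 := by
  simp only [preS, Finsupp.single_apply]
  rw [Finset.sum_ite_eq]
  simp [Finset.mem_Iic]

lemma preS_mono {n : ℕ} {j j' : Fin n} (h : j ≤ j') (m : Fin n →₀ ℕ) :
    preS j m ≤ preS j' m :=
  Finset.sum_le_sum_of_subset (Finset.Iic_subset_Iic.mpr h)

lemma Lfun_mul_monomial {n : ℕ} (p : MvPolynomial (Fin n) (ZMod 2)) (b : Fin n →₀ ℕ) :
    Lfun (p * monomial b 1) = (AddMonoidAlgebra.coeff p).sum fun m c => c * wv (m + b) := by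
  induction p using MvPolynomial.induction_on' with
  | monomial u a =>
    rw [monomial_mul, mul_one, Lfun_monomial, ← single_eq_monomial,
      AddMonoidAlgebra.coeff_single, Finsupp.sum_single_index]
    simp
  | add p q hp hq =>
    rw [add_mul, map_add, hp, hq]
    exact (Finsupp.sum_add_index' (fun m => by simp) (fun m c d => by ring)).symm

/-- Square-free vectors are admissible. -/
lemma okv_of_squarefree {n : ℕ} (m : Fin n →₀ ℕ) (h : ∀ j, m j ≤ 1) : okv m := by
  intro j
  calc preS j m ≤ ∑ _l ∈ Finset.Iic j, 1 := Finset.sum_le_sum fun l _ => h l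
    _ = (Finset.Iic j).card := by simp
    _ ≤ (j : ℕ) + 1 := le_of_eq (Fin.card_Iic j)

/-- Weight vanishes after multiplying by `t₀²`. -/
lemma wv_add_single_zero {n : ℕ} (m : Fin n →₀ ℕ) (i : Fin n) (hi : (i : ℕ) = 0) :
    wv (m + Finsupp.single i 2) = 0 := by
  rw [wv, if_neg]
  intro hok
  have := hok i
  rw [preS_add, preS_single, if_pos le_rfl] at this
  omega

/-- The key parity invariance: weight is unchanged by `t_i² ↦ t_{i-1} t_i`. -/
lemma wv_shift {n : ℕ} (m : Fin n →₀ ℕ) (i i' : Fin n) (hi : 1 ≤ (i : ℕ))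
    (hi' : (i' : ℕ) = (i : ℕ) - 1) :
    wv (m + Finsupp.single i 2) = wv (m + (Finsupp.single i' 1 + Finsupp.single i 1)) := by
  have hlt : i' < i := by rw [Fin.lt_def]; omega
  unfold wv
  congr 1
  simp only [eq_iff_iff]
  constructor
  · intro h j
    rw [preS_add, preS_add, preS_single, preS_single]
    have hj := h j
    rw [preS_add, preS_single] at hj
    by_cases h1 : i ≤ j
    · have h2 : i' ≤ j := le_of_lt (lt_of_lt_of_le hlt h1)
      simpa [h1, h2] using hj
    · by_cases h2 : i' ≤ j
      · -- i' ≤ j < i, so j = i' (since i' = i - 1)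
        have hji : (j : ℕ) < (i : ℕ) := by rwa [← Fin.lt_def, ← not_le]
        have hj' : (j : ℕ) = (i' : ℕ) := by
          have := Fin.le_def.mp h2; omega
        simp only [h1, h2, if_true, if_false, add_zero]
        -- need preS j m + 1 ≤ j + 1, i.e. preS j m ≤ j = i - 1
        by_contra hc
        push_neg at hc
        have hpm : (i : ℕ) ≤ preS j m := by omega
        have hI := h i
        rw [preS_add, preS_single, if_pos le_rfl] at hI
        have : preS j m ≤ preS i m := preS_mono (le_of_lt (by rw [Fin.lt_def]; omega)) m
        omega
      · simpa [h1, h2] using hj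
  · intro h j
    rw [preS_add, preS_single]
    have hj := h j
    rw [preS_add, preS_add, preS_single, preS_single] at hj
    by_cases h1 : i ≤ j
    · have h2 : i' ≤ j := le_of_lt (lt_of_lt_of_le hlt h1)
      simpa [h1, h2] using hj
    · by_cases h2 : i' ≤ j
      · simp only [h1, if_false, add_zero]
        simp only [h1, h2, if_true, if_false] at hj
        omega
      · simpa [h1, h2] using hj

/-- The functional `Lfun` kills every multiple of a generator of `𝒯ₙ`. -/
lemma Lfun_mul_gen {n : ℕ} (c : MvPolynomial (Fin n) (ZMod 2)) (i : Fin n) :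
    Lfun (c * (X i ^ 2 +
      if (i : ℕ) = 0 then 0
      else X (⟨(i : ℕ) - 1, Nat.lt_of_le_of_lt (Nat.sub_le _ _) i.isLt⟩ : Fin n) * X i)) = 0 := by
  by_cases hi : (i : ℕ) = 0
  · rw [if_pos hi, add_zero, X_pow_eq_monomial, Lfun_mul_monomial]
    rw [Finsupp.sum]
    apply Finset.sum_eq_zero
    intro m _
    rw [wv_add_single_zero m i hi, mul_zero]
  · rw [if_neg hi]
    set i' : Fin n := ⟨(i : ℕ) - 1, Nat.lt_of_le_of_lt (Nat.sub_le _ _) i.isLt⟩ with hi'def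
    have hXX : X (R := ZMod 2) i' * X i = monomial (Finsupp.single i' 1 + Finsupp.single i 1) 1 := by
      rw [X, X, monomial_mul, mul_one]
    rw [X_pow_eq_monomial, hXX, mul_add, map_add, Lfun_mul_monomial, Lfun_mul_monomial]
    have hkey : ∀ m : Fin n →₀ ℕ,
        wv (m + Finsupp.single i 2) = wv (m + (Finsupp.single i' 1 + Finsupp.single i 1)) := by
      intro m
      exact wv_shift m i i' (by omega) rfl
    have : ((AddMonoidAlgebra.coeff c).sum fun m a => a * wv (m + Finsupp.single i 2)) =
        (AddMonoidAlgebra.coeff c).sum fun m a => a * wv (m + (Finsupp.single i' 1 + Finsupp.single i 1)) := by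
      apply Finsupp.sum_congr
      intro m _
      rw [hkey m]
    rw [this]
    exact CharTwo.add_self_eq_zero _

/-- If all monomials of `P ∈ (ℤ/2)[t₁,…,tₙ]` are square-free and `P(1,…,1) = 1` (i.e. `P`
has an odd number of monomials), then `P ∉ 𝒯ₙ`; equivalently, the image of `P` in
`(ℤ/2)[t₁,…,tₙ]/𝒯ₙ` is nonzero. -/
theorem stmt8 (n : ℕ) (hn : 1 ≤ n) (P : MvPolynomial (Fin n) (ZMod 2))
    (hsf : ∀ m ∈ P.support, ∀ j, m j ≤ 1)
    (hodd : eval (fun _ : Fin n => (1 : ZMod 2)) P = 1) :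
    P ∉ Tideal n := by
  intro hP
  rw [Tideal, Ideal.mem_span_range_iff_exists_fun] at hP
  obtain ⟨c, hc⟩ := hP
  have hL0 : Lfun P = 0 := by
    rw [← hc, map_sum]
    apply Finset.sum_eq_zero
    intro i _
    exact Lfun_mul_gen (c i) i
  have hL1 : Lfun P = 1 := by
    have : Lfun P = ∑ m ∈ P.support, coeff m P * wv m := by
      have h1 : Lfun P = Lfun (P * monomial 0 1) := by
        rw [monomial_zero', map_one, mul_one]
      rw [h1, Lfun_mul_monomial]
      apply Finset.sum_congr rfl
      intro m _
      simp [coeff]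
    rw [this]
    rw [eval_eq] at hodd
    rw [← hodd]
    apply Finset.sum_congr rfl
    intro m hm
    rw [wv, if_pos (okv_of_squarefree m (hsf m hm))]
    simp
  rw [hL0] at hL1
  exact one_ne_zero hL1.symm
end

section
/- Let n ≥ 1. The images in the quotient ring (ℤ/2)[t₁,…,tₙ]/𝒯ₙ of the 2ⁿ square-free monomials ∏_{i∈S} t_i, where S ranges over all subsets of {1,…,n}, form a basis of this quotient as a vector space over ℤ/2. -/
open MvPolynomial Finsupp

namespace Stmt9

variable (n : ℕ)

def deadP (f : ℕ → ℕ) : Prop := ∃ l ∈ Finset.range n, l + 2 ≤ ∑ k ∈ Finset.range (l+1), f k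

instance (f : ℕ → ℕ) : Decidable (deadP n f) := by unfold deadP; infer_instance

def memS (p : ℕ) (f : ℕ → ℕ) : Prop :=
  ∃ j ∈ Finset.Ico p n, j + 1 - p ≤ ∑ k ∈ Finset.Ico p (j+1), f k

instance (p : ℕ) (f : ℕ → ℕ) : Decidable (memS n p f) := by unfold memS; infer_instance

def sfilter (f : ℕ → ℕ) : Finset (Fin n) := Finset.univ.filter (fun p => memS n p.val f)

noncomputable def F0 (f : ℕ → ℕ) : Finset (Fin n) →₀ ZMod 2 :=
  if deadP n f then 0 else Finsupp.single (sfilter n f) 1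

lemma keyA (f : ℕ → ℕ) (hn : 0 < n) (hf : 2 ≤ f 0) : deadP n f :=
  ⟨0, by simpa using hn, by simpa using hf⟩

lemma sum_bump (s : Finset ℕ) (f : ℕ → ℕ) (i : ℕ) (c : ℕ) :
    ∑ k ∈ s, (f k + if k = i then c else 0) = (∑ k ∈ s, f k) + (if i ∈ s then c else 0) := by
  rw [Finset.sum_add_distrib, Finset.sum_ite_eq' s i (fun _ => c)]

lemma keyB (f : ℕ → ℕ) (i : ℕ) (h1 : 1 ≤ i) (h2 : i < n) :
    F0 n (fun k => f k + if k = i then 2 else 0)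
      = F0 n (fun k => (f k + if k = i then 1 else 0) + if k = i - 1 then 1 else 0) := by
  set f1 : ℕ → ℕ := fun k => f k + if k = i then 2 else 0 with hf1
  set f2 : ℕ → ℕ := fun k => (f k + if k = i then 1 else 0) + if k = i - 1 then 1 else 0 with hf2
  have sum1 : ∀ s : Finset ℕ, ∑ k ∈ s, f1 k = (∑ k ∈ s, f k) + (if i ∈ s then 2 else 0) :=
    fun s => sum_bump s f i 2
  have sum2 : ∀ s : Finset ℕ, ∑ k ∈ s, f2 k
      = (∑ k ∈ s, f k) + ((if i ∈ s then 1 else 0) + (if i - 1 ∈ s then 1 else 0)) := by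
    intro s
    rw [hf2]
    rw [sum_bump s (fun k => f k + if k = i then 1 else 0) (i-1) 1, sum_bump s f i 1]
    ring
  have mono : ∀ a b : ℕ, a ≤ b → ∑ k ∈ Finset.range a, f k ≤ ∑ k ∈ Finset.range b, f k := by
    intro a b hab
    exact Finset.sum_le_sum_of_subset (Finset.range_subset_range.2 hab)
  have topIco : ∀ p : ℕ, p ≤ i → ∑ k ∈ Finset.Ico p (i+1), f k = (∑ k ∈ Finset.Ico p i, f k) + f i := by
    intro p hp
    rw [Finset.sum_Ico_succ_top hp]
  have hdead : deadP n f1 ↔ deadP n f2 := by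
    constructor
    · rintro ⟨l, hl, hle⟩
      refine ⟨l, hl, ?_⟩
      rw [sum1] at hle; rw [sum2]
      simp only [Finset.mem_range] at *
      split_ifs at hle ⊢ <;> omega
    · rintro ⟨l, hl, hle⟩
      rw [sum2] at hle
      simp only [Finset.mem_range] at hl hle
      by_cases hc : i - 1 ≤ l ∧ l < i
      · -- l = i - 1 ; use witness i for f1
        refine ⟨i, by simpa using h2, ?_⟩
        rw [sum1]
        have h3 := mono (l+1) (i+1) (by omega)
        simp only [Finset.mem_range]
        split_ifs at hle ⊢ <;> omega
      · refine ⟨l, by simpa using hl, ?_⟩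
        rw [sum1]
        simp only [Finset.mem_range] at *
        split_ifs at hle ⊢ <;> omega
  have hmem : ∀ p : ℕ, p < n → (memS n p f1 ↔ memS n p f2) := by
    intro p hp
    by_cases hpi : i < p
    · -- intervals contain neither i nor i-1
      constructor <;> rintro ⟨j, hj, hle⟩ <;> refine ⟨j, hj, ?_⟩ <;>
        simp only [Finset.mem_Ico] at hj <;>
        rw [sum1] at * <;> rw [sum2] at * <;>
        simp only [Finset.mem_Ico] at * <;>
        split_ifs at * <;> omega
    · by_cases hpi2 : i - 1 ≤ p
      · -- p = i - 1 or p = i : both memberships always hold via j = i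
        have hmm : ∀ g : ℕ → ℕ, (∀ s, ∑ k ∈ s, g k = (∑ k ∈ s, f k) + ((if i ∈ s then 1 else 0) + (if i - 1 ∈ s then 1 else 0))) → memS n p g := by
          intro g hg
          refine ⟨i, by simp only [Finset.mem_Ico]; omega, ?_⟩
          rw [hg]
          simp only [Finset.mem_Ico]
          have : ∑ k ∈ Finset.Ico p (i+1), f k ≥ 0 := Nat.zero_le _
          split_ifs <;> omega
        constructor
        · intro _
          exact hmm f2 sum2
        · intro _
          refine ⟨i, by simp only [Finset.mem_Ico]; omega, ?_⟩
          rw [sum1]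
          simp only [Finset.mem_Ico]
          split_ifs <;> omega
      · -- p < i - 1
        have hpi3 : p + 1 < i := by omega
        constructor
        · rintro ⟨j, hj, hle⟩
          refine ⟨j, hj, ?_⟩
          simp only [Finset.mem_Ico] at hj
          rw [sum1] at hle; rw [sum2]
          simp only [Finset.mem_Ico] at *
          split_ifs at hle ⊢ <;> omega
        · rintro ⟨j, hj, hle⟩
          simp only [Finset.mem_Ico] at hj
          rw [sum2] at hle
          simp only [Finset.mem_Ico] at hle
          by_cases hc : i - 1 ≤ j ∧ j < i
          · -- j = i-1, move to witness i
            refine ⟨i, by simp only [Finset.mem_Ico]; omega, ?_⟩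
            rw [sum1, topIco p (by omega)]
            simp only [Finset.mem_Ico]
            have hIJ : Finset.Ico p (j+1) = Finset.Ico p i := by
              congr 1; omega
            rw [hIJ] at hle
            split_ifs at hle ⊢ <;> omega
          · refine ⟨j, by simp only [Finset.mem_Ico]; omega, ?_⟩
            rw [sum1]
            simp only [Finset.mem_Ico]
            split_ifs at hle ⊢ <;> omega
  have hsf : sfilter n f1 = sfilter n f2 := by
    ext p
    simp only [sfilter, Finset.mem_filter, Finset.mem_univ, true_and]
    exact hmem p.val p.isLt
  unfold F0
  rw [hsf]
  by_cases hd : deadP n f1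
  · rw [if_pos hd, if_pos (hdead.1 hd)]
  · rw [if_neg hd, if_neg (fun h => hd (hdead.2 h))]

lemma keyC_dead (f : ℕ → ℕ) (hf : ∀ k, f k ≤ 1) : ¬ deadP n f := by
  rintro ⟨l, _, hle⟩
  have : ∑ k ∈ Finset.range (l+1), f k ≤ ∑ k ∈ Finset.range (l+1), 1 :=
    Finset.sum_le_sum (fun k _ => hf k)
  simp at this; omega

lemma keyC_mem (f : ℕ → ℕ) (hf : ∀ k, f k ≤ 1) (p : ℕ) (hp : p < n) :
    memS n p f ↔ f p = 1 := by
  constructor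
  · rintro ⟨j, hj, hle⟩
    simp only [Finset.mem_Ico] at hj
    by_contra h0
    have hfp : f p = 0 := by have := hf p; omega
    have : ∑ k ∈ Finset.Ico p (j+1), f k ≤ j - p := by
      rw [Finset.sum_eq_sum_sdiff_singleton_add (by simp only [Finset.mem_Ico]; omega : p ∈ Finset.Ico p (j+1)) f, hfp]
      have hcard : (Finset.Ico p (j+1) \ {p}).card = j - p := by
        rw [Finset.card_sdiff_of_subset (by simp only [Finset.singleton_subset_iff, Finset.mem_Ico]; omega)]
        simp [Nat.card_Ico]; omega
      have := Finset.sum_le_card_nsmul (Finset.Ico p (j+1) \ {p}) f 1 (fun k _ => hf k)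
      rw [hcard] at this
      simpa using this
    omega
  · intro h1
    exact ⟨p, by simp only [Finset.mem_Ico]; omega, by simp [h1]⟩

lemma keyC (f : ℕ → ℕ) (hf : ∀ k, f k ≤ 1) :
    F0 n f = Finsupp.single (Finset.univ.filter (fun p : Fin n => f p.val = 1)) 1 := by
  unfold F0
  rw [if_neg (keyC_dead n f hf)]
  congr 1
  ext p
  simp only [sfilter, Finset.mem_filter, Finset.mem_univ, true_and]
  exact keyC_mem n f hf p.val p.isLt

-- end placeholders

def Ef (e : Fin n →₀ ℕ) : ℕ → ℕ := fun k => if h : k < n then e ⟨k, h⟩ else 0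

lemma Ef_add (a b : Fin n →₀ ℕ) (k : ℕ) : Ef n (a + b) k = Ef n a k + Ef n b k := by
  unfold Ef; split_ifs <;> simp

lemma Ef_single (i : Fin n) (m : ℕ) (k : ℕ) :
    Ef n (Finsupp.single i m) k = if k = i.val then m else 0 := by
  unfold Ef
  split_ifs with h h2 h2
  · rw [Finsupp.single_apply, if_pos (by exact Fin.ext h2.symm)]
  · rw [Finsupp.single_apply, if_neg (by simp [Fin.ext_iff]; omega)]
  · exact absurd (h2 ▸ i.isLt) h
  · rfl

noncomputable def F (e : Fin n →₀ ℕ) : Finset (Fin n) →₀ ZMod 2 := F0 n (Ef n e)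

noncomputable def L : MvPolynomial (Fin n) (ZMod 2) →ₗ[ZMod 2] (Finset (Fin n) →₀ ZMod 2) :=
  (basisMonomials (Fin n) (ZMod 2)).constr (ZMod 2) (F n)

lemma L_monomial_one (e : Fin n →₀ ℕ) : L n (monomial e 1) = F n e := by
  have h : (monomial e (1 : ZMod 2)) = (basisMonomials (Fin n) (ZMod 2)) e := by
    rw [coe_basisMonomials]
  rw [h]
  exact Module.Basis.constr_basis _ _ _ _

lemma L_monomial (e : Fin n →₀ ℕ) (c : ZMod 2) : L n (monomial e c) = c • F n e := by
  have h : (monomial e c : MvPolynomial (Fin n) (ZMod 2)) = c • monomial e 1 := by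
    rw [smul_monomial, smul_eq_mul, mul_one]
  rw [h, map_smul, L_monomial_one]

noncomputable def Tgen (i : Fin n) : MvPolynomial (Fin n) (ZMod 2) :=
  X i ^ 2 +
    if (i : ℕ) = 0 then 0
    else X (⟨(i : ℕ) - 1, Nat.lt_of_le_of_lt (Nat.sub_le _ _) i.isLt⟩ : Fin n) * X i

lemma Tideal_eq : Tideal n = Ideal.span (Set.range (Tgen n)) := rfl

lemma L_mul_gen (u : Fin n →₀ ℕ) (a : ZMod 2) (i : Fin n) :
    L n (monomial u a * Tgen n i) = 0 := by
  by_cases hi : (i : ℕ) = 0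
  · rw [Tgen, if_pos hi, add_zero, X_pow_eq_monomial, monomial_mul, L_monomial]
    have hd : deadP n (Ef n (u + Finsupp.single i 2)) := by
      apply keyA n _ i.pos
      rw [Ef_add, Ef_single]
      simp [hi]
    rw [F, F0, if_pos hd, smul_zero]
  · set j : Fin n := ⟨(i : ℕ) - 1, Nat.lt_of_le_of_lt (Nat.sub_le _ _) i.isLt⟩ with hj
    have hXX : (X j * X i : MvPolynomial (Fin n) (ZMod 2))
        = monomial (Finsupp.single j 1 + Finsupp.single i 1) 1 := by
      rw [X, X, monomial_mul, one_mul]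
    rw [Tgen, if_neg hi, mul_add, X_pow_eq_monomial, hXX, monomial_mul, monomial_mul,
      mul_one, map_add, L_monomial, L_monomial]
    have e1eq : F n (u + Finsupp.single i 2)
        = F0 n (fun k => Ef n u k + if k = (i : ℕ) then 2 else 0) := by
      rw [F]; congr 1; funext k; rw [Ef_add, Ef_single]
    have e2eq : F n (u + (Finsupp.single j 1 + Finsupp.single i 1))
        = F0 n (fun k => (Ef n u k + if k = (i : ℕ) then 1 else 0)
            + if k = (i : ℕ) - 1 then 1 else 0) := by
      rw [F]; congr 1; funext k
      rw [Ef_add, Ef_add, Ef_single, Ef_single]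
      have hjv : (j : ℕ) = (i : ℕ) - 1 := rfl
      rw [hjv]; ring
    rw [e1eq, e2eq, keyB n (Ef n u) (i : ℕ) (by omega) i.isLt, ← add_smul]
    have : a + a = 0 := by
      have h2 : a + a = 2 * a := by ring
      rw [h2]
      have : (2 : ZMod 2) = 0 := rfl
      rw [this, zero_mul]
    rw [this, zero_smul]

lemma L_ideal {x : MvPolynomial (Fin n) (ZMod 2)} (hx : x ∈ Tideal n) : L n x = 0 := by
  have key : ∀ (p : MvPolynomial (Fin n) (ZMod 2)) (i : Fin n), L n (p * Tgen n i) = 0 := by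
    intro p i
    induction p using MvPolynomial.induction_on' with
    | monomial u a => exact L_mul_gen n u a i
    | add p q hp hq => rw [add_mul, map_add, hp, hq, add_zero]
  have main : ∀ (p : MvPolynomial (Fin n) (ZMod 2)), p ∈ Tideal n → ∀ q, L n (q * p) = 0 := by
    intro p hp
    rw [Tideal_eq] at hp
    refine Submodule.span_induction ?_ ?_ ?_ ?_ hp
    · rintro y ⟨i, rfl⟩ q; exact key q i
    · intro q; rw [mul_zero, map_zero]
    · intro y z _ _ hy hz q; rw [mul_add, map_add, hy, hz, add_zero]
    · intro r y _ hy q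
      rw [smul_eq_mul, ← mul_assoc, hy]
  have := main x hx 1
  rwa [one_mul] at this


lemma Ef_fin (e : Fin n →₀ ℕ) (p : Fin n) : Ef n e p.val = e p := by
  unfold Ef; rw [dif_pos p.isLt]

noncomputable def eS (S : Finset (Fin n)) : Fin n →₀ ℕ := ∑ i ∈ S, Finsupp.single i 1

lemma eS_apply (S : Finset (Fin n)) (p : Fin n) :
    eS n S p = if p ∈ S then 1 else 0 := by
  rw [eS, Finsupp.finset_sum_apply]
  rw [Finset.sum_congr rfl (fun i _ => Finsupp.single_apply)]
  rw [Finset.sum_ite_eq' S p (fun _ => 1)]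

lemma prodX (S : Finset (Fin n)) :
    (∏ i ∈ S, X i : MvPolynomial (Fin n) (ZMod 2)) = monomial (eS n S) 1 := by
  classical
  induction S using Finset.induction_on with
  | empty => simp [eS, monomial_zero']
  | insert a s hx ih =>
      rw [Finset.prod_insert hx, ih, X, monomial_mul, one_mul, eS, eS,
        Finset.sum_insert hx]

lemma F_eS (S : Finset (Fin n)) : F n (eS n S) = Finsupp.single S 1 := by
  rw [F, keyC n _ ?hf]
  case hf =>
    intro k
    unfold Ef
    split_ifs with h
    · rw [eS_apply]; split_ifs <;> omega
    · omega
  congr 1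
  ext p
  simp only [Finset.mem_filter, Finset.mem_univ, true_and]
  rw [Ef_fin, eS_apply]
  split_ifs with h <;> simp [h]

noncomputable def Φ : MvPolynomial (Fin n) (ZMod 2) →ₐ[ZMod 2]
    MvPolynomial (Fin n) (ZMod 2) ⧸ Tideal n := Ideal.Quotient.mkₐ (ZMod 2) (Tideal n)

noncomputable def v (S : Finset (Fin n)) : MvPolynomial (Fin n) (ZMod 2) ⧸ Tideal n :=
  Φ n (∏ i ∈ S, X i)

lemma p_add_self (p : MvPolynomial (Fin n) (ZMod 2)) : p + p = 0 := by
  rw [← two_smul (ZMod 2) p]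
  have : (2 : ZMod 2) = 0 := rfl
  rw [this, zero_smul]

lemma li : LinearIndependent (ZMod 2) (v n) := by
  rw [linearIndependent_iff]
  intro l hl
  have h1 : Finsupp.linearCombination (ZMod 2) (v n) l
      = Φ n (l.sum fun S c => monomial (eS n S) c) := by
    rw [Finsupp.linearCombination_apply, map_finsuppSum]
    refine Finsupp.sum_congr (fun S _ => ?_)
    have hm : (monomial (eS n S) (l S) : MvPolynomial (Fin n) (ZMod 2))
        = l S • monomial (eS n S) 1 := by
      rw [smul_monomial, smul_eq_mul, mul_one]
    rw [hm, map_smul, ← prodX]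
    rfl
  rw [h1] at hl
  have h2 : (l.sum fun S c => monomial (eS n S) c) ∈ Tideal n := by
    rwa [Φ, Ideal.Quotient.mkₐ_eq_mk, Ideal.Quotient.eq_zero_iff_mem] at hl
  have h3 := L_ideal n h2
  rw [map_finsuppSum] at h3
  have h4 : (l.sum fun S c => L n (monomial (eS n S) c)) = l.sum fun S c => Finsupp.single S c := by
    refine Finsupp.sum_congr (fun S _ => ?_)
    rw [L_monomial, F_eS, Finsupp.smul_single, smul_eq_mul, mul_one]
  rw [h4, Finsupp.sum_single] at h3
  exact h3

noncomputable def W (e : Fin n →₀ ℕ) : ℕ := e.sum fun k m => m * ((k : ℕ) + 1)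

lemma W_add (a b : Fin n →₀ ℕ) : W n (a + b) = W n a + W n b := by
  unfold W
  exact Finsupp.sum_add_index' (fun k => by simp) (fun k m₁ m₂ => by ring)

lemma W_single (i : Fin n) (m : ℕ) : W n (Finsupp.single i m) = m * ((i : ℕ) + 1) := by
  unfold W
  exact Finsupp.sum_single_index (by simp)

lemma mem_span_monomial (e : Fin n →₀ ℕ) (c : ZMod 2) :
    Φ n (monomial e c) ∈ Submodule.span (ZMod 2) (Set.range (v n)) := by
  have H : ∀ N : ℕ, ∀ (e : Fin n →₀ ℕ) (c : ZMod 2), W n e ≤ N →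
      Φ n (monomial e c) ∈ Submodule.span (ZMod 2) (Set.range (v n)) := by
    intro N
    induction N using Nat.strong_induction_on with
    | _ N ih =>
      intro e c hW
      by_cases hsq : ∀ k, e k ≤ 1
      · -- square-free
        have hes : eS n e.support = e := by
          ext k
          rw [eS_apply]
          by_cases hk : k ∈ e.support
          · rw [if_pos hk]
            have := Finsupp.mem_support_iff.1 hk
            have := hsq k
            omega
          · rw [if_neg hk]
            have := Finsupp.notMem_support_iff.1 hk
            omega
        have : (monomial e c : MvPolynomial (Fin n) (ZMod 2)) = c • ∏ i ∈ e.support, X i := by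
          rw [prodX, hes, smul_monomial, smul_eq_mul, mul_one]
        rw [this, map_smul]
        exact Submodule.smul_mem _ _ (Submodule.subset_span ⟨e.support, rfl⟩)
      · push_neg at hsq
        obtain ⟨i, hi⟩ := hsq
        have hi2 : 2 ≤ e i := hi
        set e' : Fin n →₀ ℕ := e - Finsupp.single i 2 with he'
        have hee : e' + Finsupp.single i 2 = e := by
          ext k
          rw [Finsupp.add_apply, he', Finsupp.tsub_apply]
          rcases eq_or_ne k i with rfl | hk
          · simp; omega
          · rw [Finsupp.single_apply, if_neg (fun h => hk h.symm)]
            simp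
        have hWe : W n e = W n e' + 2 * ((i : ℕ) + 1) := by
          rw [← hee, W_add, W_single]
        by_cases hz : (i : ℕ) = 0
        · have : (monomial e c : MvPolynomial (Fin n) (ZMod 2))
              = monomial e' c * Tgen n i := by
            rw [Tgen, if_pos hz, add_zero, X_pow_eq_monomial, monomial_mul, mul_one, hee]
          rw [this]
          have hmem : monomial e' c * Tgen n i ∈ Tideal n := by
            rw [Tideal_eq]
            exact Ideal.mul_mem_left _ _ (Ideal.subset_span ⟨i, rfl⟩)
          have : Φ n (monomial e' c * Tgen n i) = 0 := by
            rw [Φ, Ideal.Quotient.mkₐ_eq_mk, Ideal.Quotient.eq_zero_iff_mem]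
            exact hmem
          rw [this]
          exact Submodule.zero_mem _
        · set j : Fin n := ⟨(i : ℕ) - 1, Nat.lt_of_le_of_lt (Nat.sub_le _ _) i.isLt⟩ with hj
          set e'' : Fin n →₀ ℕ := e' + (Finsupp.single j 1 + Finsupp.single i 1) with he''
          have hexp : monomial e' c * Tgen n i
              = monomial e c + (monomial e'' c : MvPolynomial (Fin n) (ZMod 2)) := by
            have hXX : (X j * X i : MvPolynomial (Fin n) (ZMod 2))
                = monomial (Finsupp.single j 1 + Finsupp.single i 1) 1 := by
              rw [X, X, monomial_mul, one_mul]
            rw [Tgen, if_neg hz, mul_add, X_pow_eq_monomial, hXX, monomial_mul, monomial_mul,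
              mul_one, hee]
          have hmon : (monomial e c : MvPolynomial (Fin n) (ZMod 2))
              = monomial e' c * Tgen n i + monomial e'' c := by
            rw [hexp, add_assoc, p_add_self, add_zero]
          have hWe'' : W n e'' + 1 = W n e := by
            rw [he'', W_add, W_add, W_single, W_single, hWe]
            have : (j : ℕ) = (i : ℕ) - 1 := rfl
            rw [this]
            omega
          have hmem : monomial e' c * Tgen n i ∈ Tideal n := by
            rw [Tideal_eq]
            exact Ideal.mul_mem_left _ _ (Ideal.subset_span ⟨i, rfl⟩)
          have hz' : Φ n (monomial e' c * Tgen n i) = 0 := by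
            rw [Φ, Ideal.Quotient.mkₐ_eq_mk, Ideal.Quotient.eq_zero_iff_mem]
            exact hmem
          rw [hmon, map_add, hz', zero_add]
          exact ih (W n e'') (by omega) e'' c (le_refl _)
  exact H (W n e) e c (le_refl _)

lemma span_top : ⊤ ≤ Submodule.span (ZMod 2) (Set.range (v n)) := by
  intro x _
  obtain ⟨p, rfl⟩ := Ideal.Quotient.mk_surjective (I := Tideal n) x
  have : ∀ p : MvPolynomial (Fin n) (ZMod 2),
      Φ n p ∈ Submodule.span (ZMod 2) (Set.range (v n)) := by
    intro p
    induction p using MvPolynomial.induction_on' with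
    | monomial u a => exact mem_span_monomial n u a
    | add p q hp hq => rw [map_add]; exact Submodule.add_mem _ hp hq
  exact this p

end Stmt9

/-- The images of the `2ⁿ` square-free monomials `∏_{i∈S} t_i` (over subsets
`S ⊆ {1,…,n}`) form a ℤ/2-basis of the quotient `(ℤ/2)[t₁,…,tₙ]/𝒯ₙ`. -/
theorem stmt9 (n : ℕ) (hn : 1 ≤ n) :
    ∃ B : Module.Basis (Finset (Fin n)) (ZMod 2) (MvPolynomial (Fin n) (ZMod 2) ⧸ Tideal n),
      ∀ S : Finset (Fin n), B S = Ideal.Quotient.mk (Tideal n) (∏ i ∈ S, X i) := by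
  refine ⟨Module.Basis.mk (Stmt9.li n) (Stmt9.span_top n), fun S => ?_⟩
  rw [Module.Basis.mk_apply]
  rfl
end

section
/- Suppose σ : ℕ × ℕ → ℤ/2 satisfies: σ(2,0) = 1 and σ(2,1) = 1; for every n ≥ 2, σ(n+1, k) = Σ_{i=0}^{k} σ(n, i) for all k with 0 ≤ k ≤ n−1; and σ(n+1, n) = σ(n+1, n−1) for every n ≥ 2. Then for every n ≥ 2 and every k with 0 ≤ k ≤ n−1, σ(n, k) equals the binomial coefficient C(n+k, k) reduced modulo 2. -/
lemma hockey_stick (n k : ℕ) :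
    ∑ i ∈ Finset.range (k + 1), (n + i).choose i = (n + k + 1).choose k := by
  induction k with
  | zero => simp
  | succ k ih =>
    rw [Finset.sum_range_succ, ih]
    have h2 : n + (k + 1) = n + k + 1 := by ring
    rw [h2]
    exact (Nat.choose_succ_succ (n + k + 1) k).symm

lemma central_even (m : ℕ) :
    (2 * m + 2).choose (m + 1) = 2 * ((2 * m + 1).choose m) := by
  have hs : (2 * m + 1).choose (m + 1) = (2 * m + 1).choose m := by
    rw [← Nat.choose_symm (by omega : m + 1 ≤ 2 * m + 1)]
    congr 1; omega
  have h : (2 * m + 2).choose (m + 1)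
      = (2 * m + 1).choose m + (2 * m + 1).choose (m + 1) :=
    Nat.choose_succ_succ (2 * m + 1) m
  rw [h, hs]; ring

/-- Suppose `σ : ℕ × ℕ → ℤ/2` satisfies `σ(2,0) = σ(2,1) = 1`, the recursion
`σ(n+1,k) = ∑_{i=0}^{k} σ(n,i)` for all `n ≥ 2` and `0 ≤ k ≤ n−1`, and
`σ(n+1,n) = σ(n+1,n−1)` for all `n ≥ 2`. Then `σ(n,k) ≡ C(n+k,k) (mod 2)` for all
`n ≥ 2` and `0 ≤ k ≤ n−1`. -/
theorem stmt10 (σ : ℕ × ℕ → ZMod 2)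
    (h20 : σ (2, 0) = 1) (h21 : σ (2, 1) = 1)
    (hrec : ∀ n, 2 ≤ n → ∀ k, k ≤ n - 1 →
      σ (n + 1, k) = ∑ i ∈ Finset.range (k + 1), σ (n, i))
    (htop : ∀ n, 2 ≤ n → σ (n + 1, n) = σ (n + 1, n - 1)) :
    ∀ n, 2 ≤ n → ∀ k, k ≤ n - 1 → σ (n, k) = ((n + k).choose k : ZMod 2) := by
  intro n hn
  induction n, hn using Nat.le_induction with
  | base =>
    intro k hk
    interval_cases k
    · simpa using h20
    · rw [h21]; decide
  | succ m hm ih =>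
    have key : ∀ k, k ≤ m - 1 → σ (m + 1, k) = (((m + 1) + k).choose k : ZMod 2) := by
      intro k hk
      rw [hrec m hm k hk]
      have heq : ∀ i ∈ Finset.range (k + 1), σ (m, i) = (((m + i).choose i : ℕ) : ZMod 2) := by
        intro i hi
        exact ih i (by simp at hi; omega)
      rw [Finset.sum_congr rfl heq, ← Nat.cast_sum, hockey_stick]
      have : m + 1 + k = m + k + 1 := by omega
      rw [this]
    intro k hk
    simp only [Nat.add_sub_cancel] at hk
    rcases Nat.lt_or_ge k m with hlt | hge
    · exact key k (by omega)
    · have hkm : k = m := by omega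
      rw [hkm, htop m hm, key (m - 1) le_rfl]
      obtain ⟨p, rfl⟩ : ∃ p, m = p + 1 := ⟨m - 1, by omega⟩
      have h1 : (p + 1 + 1) + (p + 1 - 1) = 2 * p + 2 := by omega
      have h2 : (p + 1 + 1) + (p + 1) = 2 * p + 2 + 1 := by ring
      have h3 : p + 1 - 1 = p := by omega
      rw [h1, h2, h3]
      have h4 : (2 * p + 2 + 1).choose (p + 1)
          = (2 * p + 2).choose p + (2 * p + 2).choose (p + 1) :=
        Nat.choose_succ_succ (2 * p + 2) p
      rw [h4, Nat.cast_add, central_even p, Nat.cast_mul]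
      simp [(by decide : (2 : ZMod 2) = 0)]
end

section
/- Let n ≥ 1. Let W ∈ (ℤ/2)[t₁,…,tₙ] be the product W = ∏_{j=1}^{n−1} (1 + t_j + t_j² + ⋯ + t_j^{j}), and let W_n denote its homogeneous component of degree n. Then W_n lies in the ideal 𝒯ₙ; equivalently, the image of W_n in (ℤ/2)[t₁,…,tₙ]/𝒯ₙ is zero. -/
open MvPolynomial

lemma sum_single_deg (n : ℕ) (a : Fin n) (c : ℕ) :
    (∑ j : Fin n, (Finsupp.single a c) j) = c := by
  rw [Finset.sum_eq_single a]
  · simp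
  · intro b _ hb
    simp [Finsupp.single_apply, Ne.symm hb]
  · intro h
    exact absurd (Finset.mem_univ a) h

lemma sum_single_wt (n : ℕ) (a : Fin n) (c : ℕ) :
    (∑ j : Fin n, (j : ℕ) * (Finsupp.single a c) j) = (a : ℕ) * c := by
  rw [Finset.sum_eq_single a]
  · simp
  · intro b _ hb
    simp [Finsupp.single_apply, Ne.symm hb]
  · intro h
    exact absurd (Finset.mem_univ a) h

/-- Key lemma: any monomial of total degree ≥ n whose support avoids the last
variable lies in `Tideal n`. Induction on the weight `∑ j, j * d j`. -/
lemma Tideal.monomial_mem (n : ℕ) (hn : 1 ≤ n) (w : ℕ) :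
    ∀ d : Fin n →₀ ℕ, (∑ j : Fin n, (j : ℕ) * d j) ≤ w →
      n ≤ ∑ j : Fin n, d j →
      (∀ j : Fin n, d j ≠ 0 → (j : ℕ) < n - 1) →
      monomial d (1 : ZMod 2) ∈ Tideal n := by
  induction w using Nat.strong_induction_on with
  | _ w ih =>
  intro d hw hdeg hsupp
  -- find a variable with exponent ≥ 2
  have hex : ∃ i : Fin n, 2 ≤ d i := by
    by_contra h
    push_neg at h
    set last : Fin n := ⟨n - 1, by omega⟩ with hlast
    have hsub : d.support ⊆ Finset.univ.erase last := by
      intro j hj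
      refine Finset.mem_erase.mpr ⟨?_, Finset.mem_univ j⟩
      intro hje
      have := hsupp j (Finsupp.mem_support_iff.mp hj)
      rw [hje] at this
      simp [hlast] at this
    have hcard : d.support.card ≤ n - 1 := by
      have := Finset.card_le_card hsub
      rwa [Finset.card_erase_of_mem (Finset.mem_univ _), Finset.card_univ,
        Fintype.card_fin] at this
    have hdeg2 : (∑ j : Fin n, d j) ≤ d.support.card := by
      rw [← Finset.sum_subset (Finset.subset_univ d.support)
        (fun j _ hj => Finsupp.notMem_support_iff.mp hj)]
      calc (∑ j ∈ d.support, d j) ≤ ∑ _j ∈ d.support, 1 :=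
            Finset.sum_le_sum fun j _ => by have := h j; omega
        _ = d.support.card := by simp
    omega
  obtain ⟨i, hi⟩ := hex
  -- e = d - single i 2
  set e : Fin n →₀ ℕ := d - Finsupp.single i 2 with he
  have heapp : ∀ j, e j = d j - (Finsupp.single i 2) j := fun j => Finsupp.tsub_apply _ _ _
  have hd_eq : d = Finsupp.single i 2 + e := by
    ext j
    rw [Finsupp.add_apply, heapp]
    rcases eq_or_ne i j with rfl | hij
    · simp; omega
    · simp [Finsupp.single_apply, hij]
  by_cases h0 : (i : ℕ) = 0
  · -- X i ^ 2 divides the monomial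
    have hg : (X i ^ 2 : MvPolynomial (Fin n) (ZMod 2)) ∈ Tideal n := by
      have := Tideal.gen_mem n i
      rwa [if_pos h0, add_zero] at this
    have : monomial d (1 : ZMod 2) = X i ^ 2 * monomial e 1 := by
      rw [X_pow_eq_monomial, monomial_mul, one_mul, ← hd_eq]
    rw [this]
    exact Ideal.mul_mem_right _ _ hg
  · -- use the relation X i ^ 2 = X i' * X i
    set i' : Fin n := ⟨(i : ℕ) - 1, Nat.lt_of_le_of_lt (Nat.sub_le _ _) i.isLt⟩ with hi'
    have hg : (X i ^ 2 + X i' * X i : MvPolynomial (Fin n) (ZMod 2)) ∈ Tideal n := by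
      have := Tideal.gen_mem n i
      rwa [if_neg h0] at this
    set d' : Fin n →₀ ℕ := Finsupp.single i' 1 + Finsupp.single i 1 + e with hd'
    have h1 : X i ^ 2 * monomial e (1 : ZMod 2) = monomial d 1 := by
      rw [X_pow_eq_monomial, monomial_mul, one_mul, ← hd_eq]
    have h2 : (X i' * X i) * monomial e (1 : ZMod 2) = monomial d' 1 := by
      rw [X, X, monomial_mul, monomial_mul]
      norm_num
      exact hd'.symm
    -- sums for e
    have hdsum : (∑ j : Fin n, d j) = 2 + ∑ j : Fin n, e j := by
      conv_lhs => rw [hd_eq]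
      simp only [Finsupp.add_apply, Finset.sum_add_distrib, sum_single_deg]
    have hwsum : (∑ j : Fin n, (j : ℕ) * d j) = 2 * (i : ℕ) + ∑ j : Fin n, (j : ℕ) * e j := by
      conv_lhs => rw [hd_eq]
      simp only [Finsupp.add_apply, Nat.mul_add, Finset.sum_add_distrib, sum_single_wt]
      ring
    have hd'sum : (∑ j : Fin n, d' j) = 2 + ∑ j : Fin n, e j := by
      rw [hd']
      simp only [Finsupp.add_apply, Finset.sum_add_distrib, sum_single_deg]
    have hw'sum : (∑ j : Fin n, (j : ℕ) * d' j)
        = (i' : ℕ) + (i : ℕ) + ∑ j : Fin n, (j : ℕ) * e j := by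
      rw [hd']
      simp only [Finsupp.add_apply, Nat.mul_add, Finset.sum_add_distrib, sum_single_wt]
      ring
    have hipos : 1 ≤ (i : ℕ) := by omega
    have hii' : (i' : ℕ) = (i : ℕ) - 1 := rfl
    -- apply induction hypothesis to d'
    have hmem' : monomial d' (1 : ZMod 2) ∈ Tideal n := by
      refine ih (∑ j : Fin n, (j : ℕ) * d' j) (by omega) d' le_rfl (by omega) ?_
      intro j hj
      rw [hd'] at hj
      simp only [Finsupp.add_apply] at hj
      have hin : (i : ℕ) < n - 1 := hsupp i (by omega)
      rcases eq_or_ne i' j with rfl | h1j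
      · omega
      rcases eq_or_ne i j with rfl | h2j
      · exact hin
      have : e j ≠ 0 := by
        simp [Finsupp.single_apply, h1j, h2j] at hj
        exact hj
      have : d j ≠ 0 := by rw [heapp] at this; omega
      exact hsupp j this
    have hkey : monomial d (1 : ZMod 2)
        = (X i ^ 2 + X i' * X i) * monomial e 1 - monomial d' 1 := by
      rw [add_mul, h1, h2]; ring
    rw [hkey]
    exact Ideal.sub_mem _ (Ideal.mul_mem_right _ _ hg) hmem'

/-- Let `W = ∏_{j=1}^{n−1} (1 + t_j + ⋯ + t_j^j)` (zero-based: `t_j ↔ X i` with `i < n−1`,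
the `j`-th factor being `∑_{e<i+2} (X i)^e`). Then the degree-`n` homogeneous component of
`W` lies in `𝒯ₙ`, i.e. its image in `(ℤ/2)[t₁,…,tₙ]/𝒯ₙ` is zero. -/
theorem stmt13 (n : ℕ) (hn : 1 ≤ n) :
    homogeneousComponent n
        (∏ i ∈ Finset.univ.filter (fun i : Fin n => (i : ℕ) < n - 1),
          ∑ e ∈ Finset.range ((i : ℕ) + 2), X i ^ e) ∈ Tideal n := by
  classical
  set φ : MvPolynomial (Fin n) (ZMod 2) :=
    ∏ i ∈ Finset.univ.filter (fun i : Fin n => (i : ℕ) < n - 1),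
      ∑ e ∈ Finset.range ((i : ℕ) + 2), X i ^ e with hφ
  have hvars : ∀ j : Fin n, j ∈ φ.vars → (j : ℕ) < n - 1 := by
    intro j hj
    have h1 := vars_prod (s := Finset.univ.filter (fun i : Fin n => (i : ℕ) < n - 1))
      (fun i => ∑ e ∈ Finset.range ((i : ℕ) + 2), X i ^ e) hj
    obtain ⟨i, hi, hji⟩ := Finset.mem_biUnion.mp h1
    have hi' : (i : ℕ) < n - 1 := (Finset.mem_filter.mp hi).2
    have h2 := vars_sum_subset (Finset.range ((i : ℕ) + 2))
      (fun e => X i ^ e) hji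
    obtain ⟨e, _, hje⟩ := Finset.mem_biUnion.mp h2
    have h3 : j ∈ (X i : MvPolynomial (Fin n) (ZMod 2)).vars := vars_pow _ e hje
    rw [vars_X] at h3
    have : j = i := Finset.mem_singleton.mp h3
    omega
  rw [homogeneousComponent_apply]
  apply Ideal.sum_mem
  intro d hd
  rw [Finset.mem_filter] at hd
  obtain ⟨hdsupp, hddeg⟩ := hd
  have hmono : (monomial d (coeff d φ) : MvPolynomial (Fin n) (ZMod 2))
      = C (coeff d φ) * monomial d 1 := by rw [C_mul_monomial, mul_one]
  rw [hmono]
  apply Ideal.mul_mem_left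
  apply Tideal.monomial_mem n hn (∑ j : Fin n, (j : ℕ) * d j) d le_rfl
  · have : (Finsupp.degree d) = ∑ j : Fin n, d j := by
      rw [Finsupp.degree]
      exact Finset.sum_subset (Finset.subset_univ d.support)
        (fun j _ hj => Finsupp.notMem_support_iff.mp hj)
    omega
  · intro j hj
    apply hvars
    rw [mem_vars]
    exact ⟨d, hdsupp, Finsupp.mem_support_iff.mpr hj⟩
end
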